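/- Let (A, ≻_λ, ≺_λ, ⋎_λ) be a conformal NS-algebra. Then (A, ∘_λ, ∨_λ) is an NS-Lie conformal algebra, where x∘_λ y = x≻_λ y - y≺_{-λ-∂}x and x∨_λ y = x⋎_λ y - y⋎_{-λ-∂}x. -/

import Mathlib

/- ------------------------------------------------------------------
Common definitions: λ-polynomials with coefficients in a ℂ[∂]-module,
Lie conformal algebras, modules, cochain complexes, the
Nijenhuis–Richardson bracket, bidegrees, lifts and twistings.
------------------------------------------------------------------- -/

open scoped Classical

noncomputable section

namespace LCAF

/-- `MP k M` : `M`-valued polynomials in the `k` variables `λ₀, …, λ_{k-1}`,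
encoded as finitely supported functions on multi-indices. -/
abbrev MP (k : ℕ) (M : Type*) [AddCommGroup M] : Type _ :=
  (Fin k →₀ ℕ) →₀ M

variable {A B M N A₁ A₂ : Type*}

section PolyOps

variable [AddCommGroup M] [Module ℂ M] [AddCommGroup N] [Module ℂ N]

/-- Apply a linear map to all coefficients of a polynomial. -/
def mapCoeff {k : ℕ} (g : M →ₗ[ℂ] N) (p : MP k M) : MP k N :=
  p.mapRange g (map_zero g)

/-- Multiplication by the monomial `λ^α`. -/
def monMul {k : ℕ} (α : Fin k →₀ ℕ) (p : MP k M) : MP k M :=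
  Finsupp.mapDomain (fun β => α + β) p

/-- The variable `λᵢ` as a scalar polynomial. -/
def Xv {k : ℕ} (i : Fin k) : MP k ℂ :=
  Finsupp.single (Finsupp.single i 1) (1 : ℂ)

/-- Multiplication of an `M`-valued polynomial by a scalar polynomial. -/
def scaleP {k : ℕ} (q : MP k ℂ) (p : MP k M) : MP k M :=
  q.sum fun α r => r • monMul α p

/-- The operator `q + c∂` acting on `M`-valued polynomials. -/
def opnd {k : ℕ} (D : M →ₗ[ℂ] M) (q : MP k ℂ) (c : ℂ) : MP k M → MP k M :=
  fun p => scaleP q p + c • mapCoeff D p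

/-- Substitution: in an `M`-valued polynomial in `k` variables, substitute the
`i`-th variable by the affine expression `q i + (c i)·∂` (with `∂ = D` acting on
coefficients), landing in polynomials in `k'` new variables. -/
def substFun {k k' : ℕ} (D : M →ₗ[ℂ] M) (q : Fin k → MP k' ℂ) (c : Fin k → ℂ)
    (p : MP k M) : MP k' M :=
  p.sum fun α m =>
    ((List.ofFn fun i : Fin k => (opnd D (q i) (c i))^[α i]).foldr (· ∘ ·) id)
      (Finsupp.single 0 m)

/-- Renaming of variables. -/
def renameV {k k' : ℕ} (h : Fin k → Fin k') (p : MP k M) : MP k' M :=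
  Finsupp.mapDomain (fun α => Finsupp.mapDomain h α) p

/-- The substitution `λ ↦ -λ-∂` in one variable. -/
def sub1 (D : M →ₗ[ℂ] M) (p : MP 1 M) : MP 1 M :=
  substFun D (fun _ => -(Xv 0)) (fun _ => -1) p

/-- The multi-index of the single variable `λ` in one variable. -/
def lam1 : Fin 1 →₀ ℕ := Finsupp.single 0 1

end PolyOps

section Binary

variable [AddCommGroup M] [Module ℂ M]

/-- `F` with its variable substituted by the expression `q + c ∂`, in two
variables `λ = λ₀`, `μ = λ₁`. -/
def opE (D : M →ₗ[ℂ] M) (F : A → B → MP 1 M) (q : MP 2 ℂ) (c : ℂ) (a : A) (b : B) :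
    MP 2 M :=
  substFun D (fun _ => q) (fun _ => c) (F a b)

/-- `F` applied with polynomial second argument (extended coefficientwise). -/
def opR [AddCommGroup B] [Module ℂ B] (D : M →ₗ[ℂ] M) (F : A → B → MP 1 M)
    (q : MP 2 ℂ) (c : ℂ) (a : A) (p : MP 2 B) : MP 2 M :=
  p.sum fun β x => monMul β (opE D F q c a x)

/-- `F` applied with polynomial first argument (extended coefficientwise). -/
def opL [AddCommGroup A] [Module ℂ A] (D : M →ₗ[ℂ] M) (F : A → B → MP 1 M)
    (q : MP 2 ℂ) (c : ℂ) (p : MP 2 A) (b : B) : MP 2 M :=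
  p.sum fun β x => monMul β (opE D F q c x b)

end Binary

section LCA

variable [AddCommGroup A] [Module ℂ A] [AddCommGroup M] [Module ℂ M]

/-- `(A, D, br)` is a Lie conformal algebra: `br a b` is `[a_λ b]`, an `A`-valued
polynomial in one variable `λ`. -/
structure IsLCA (D : A →ₗ[ℂ] A) (br : A → A → MP 1 A) : Prop where
  add_left : ∀ a b c : A, br (a + b) c = br a c + br b c
  smul_left : ∀ (r : ℂ) (a b : A), br (r • a) b = r • br a b
  add_right : ∀ a b c : A, br a (b + c) = br a b + br a c
  smul_right : ∀ (r : ℂ) (a b : A), br a (r • b) = r • br a b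
  sesq_left : ∀ a b : A, br (D a) b = -(monMul lam1 (br a b))
  sesq_right : ∀ a b : A, br a (D b) = monMul lam1 (br a b) + mapCoeff D (br a b)
  skew : ∀ a b : A, br a b = -(sub1 D (br b a))
  jacobi : ∀ a b c : A,
    opR D br (Xv 0) 0 a (renameV (fun _ => (1 : Fin 2)) (br b c)) =
      opL D br (Xv 0 + Xv 1) 0 (renameV (fun _ => (0 : Fin 2)) (br a b)) c +
        opR D br (Xv 1) 0 b (renameV (fun _ => (0 : Fin 2)) (br a c))

/-- `(M, DM, rho)` is a module over the Lie conformal algebra `(A, D, br)`. -/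
structure IsLCAMod (D : A →ₗ[ℂ] A) (br : A → A → MP 1 A)
    (DM : M →ₗ[ℂ] M) (rho : A → M → MP 1 M) : Prop where
  add_left : ∀ (a b : A) (m : M), rho (a + b) m = rho a m + rho b m
  smul_left : ∀ (r : ℂ) (a : A) (m : M), rho (r • a) m = r • rho a m
  add_right : ∀ (a : A) (m n : M), rho a (m + n) = rho a m + rho a n
  smul_right : ∀ (r : ℂ) (a : A) (m : M), rho a (r • m) = r • rho a m
  d_left : ∀ (a : A) (m : M), rho (D a) m = -(monMul lam1 (rho a m))
  d_right : ∀ (a : A) (m : M),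
    rho a (DM m) = monMul lam1 (rho a m) + mapCoeff DM (rho a m)
  comm : ∀ (a b : A) (m : M),
    opR DM rho (Xv 0) 0 a (renameV (fun _ => (1 : Fin 2)) (rho b m)) -
      opR DM rho (Xv 1) 0 b (renameV (fun _ => (0 : Fin 2)) (rho a m)) =
    opL DM rho (Xv 0 + Xv 1) 0 (renameV (fun _ => (0 : Fin 2)) (br a b)) m

/-- `phi` is a 2-cocycle of `(A, D, br)` with coefficients in the module
`(M, DM, rho)`. -/
structure IsTwoCocycle (D : A →ₗ[ℂ] A) (br : A → A → MP 1 A)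
    (DM : M →ₗ[ℂ] M) (rho : A → M → MP 1 M) (phi : A → A → MP 1 M) : Prop where
  add_left : ∀ (a b c : A), phi (a + b) c = phi a c + phi b c
  smul_left : ∀ (r : ℂ) (a b : A), phi (r • a) b = r • phi a b
  add_right : ∀ (a b c : A), phi a (b + c) = phi a b + phi a c
  smul_right : ∀ (r : ℂ) (a b : A), phi a (r • b) = r • phi a b
  sesq_left : ∀ a b : A, phi (D a) b = -(monMul lam1 (phi a b))
  sesq_right : ∀ a b : A, phi a (D b) = monMul lam1 (phi a b) + mapCoeff DM (phi a b)
  skew : ∀ a b : A, phi a b = -(sub1 DM (phi b a))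
  cocycle : ∀ a b c : A,
    opR DM rho (Xv 0) 0 a (renameV (fun _ => (1 : Fin 2)) (phi b c))
      - opR DM rho (Xv 1) 0 b (renameV (fun _ => (0 : Fin 2)) (phi a c))
      + opR DM rho (-(Xv 0) - Xv 1) (-1) c (renameV (fun _ => (0 : Fin 2)) (phi a b))
      + opR DM phi (Xv 0) 0 a (renameV (fun _ => (1 : Fin 2)) (br b c))
      - opR DM phi (Xv 1) 0 b (renameV (fun _ => (0 : Fin 2)) (br a c))
      - opL DM phi (Xv 0 + Xv 1) 0 (renameV (fun _ => (0 : Fin 2)) (br a b)) c = 0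

/-- `T : M → A` is a relative Rota–Baxter operator. -/
def IsRB (br : A → A → MP 1 A) (DM : M →ₗ[ℂ] M) (rho : A → M → MP 1 M)
    (T : M →ₗ[ℂ] A) : Prop :=
  ∀ m n : M, br (T m) (T n) = mapCoeff T (rho (T m) n - sub1 DM (rho (T n) m))

/-- `T : M → A` is a `φ`-twisted relative Rota–Baxter operator. -/
def IsTwistedRB (br : A → A → MP 1 A) (DM : M →ₗ[ℂ] M) (rho : A → M → MP 1 M)
    (phi : A → A → MP 1 M) (T : M →ₗ[ℂ] A) : Prop :=
  ∀ m n : M, br (T m) (T n) =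
    mapCoeff T (rho (T m) n - sub1 DM (rho (T n) m) + phi (T m) (T n))

/-- Combine an `A`-valued and an `M`-valued polynomial into an `A × M`-valued one. -/
def pairP {k : ℕ} (p : MP k A) (q : MP k M) : MP k (A × M) :=
  Finsupp.mapRange (fun a => (a, (0 : M))) rfl p +
    Finsupp.mapRange (fun m => ((0 : A), m)) rfl q

/-- The (φ-twisted) semidirect product λ-bracket on `A × M`. -/
def sdBr (br : A → A → MP 1 A) (DM : M →ₗ[ℂ] M) (rho : A → M → MP 1 M)
    (phi : A → A → MP 1 M) : A × M → A × M → MP 1 (A × M) :=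
  fun x y => pairP (br x.1 y.1) (rho x.1 y.2 - sub1 DM (rho y.1 x.2) + phi x.1 y.1)

end LCA

section NS

variable [AddCommGroup A] [Module ℂ A]

/-- The λ-bracket `[a_λ b] = a∘_λ b - b∘_{-λ-∂} a + a∨_λ b` attached to a pair of
λ-multiplications. -/
def lieNS (D : A →ₗ[ℂ] A) (o v : A → A → MP 1 A) : A → A → MP 1 A :=
  fun a b => o a b - sub1 D (o b a) + v a b

/-- `(A, ∘_λ, ∨_λ)` is an NS-Lie conformal algebra. -/
structure IsNSLie (D : A →ₗ[ℂ] A) (o v : A → A → MP 1 A) : Prop where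
  o_add_left : ∀ a b c : A, o (a + b) c = o a c + o b c
  o_smul_left : ∀ (r : ℂ) (a b : A), o (r • a) b = r • o a b
  o_add_right : ∀ a b c : A, o a (b + c) = o a b + o a c
  o_smul_right : ∀ (r : ℂ) (a b : A), o a (r • b) = r • o a b
  o_sesq_left : ∀ a b : A, o (D a) b = -(monMul lam1 (o a b))
  o_sesq_right : ∀ a b : A, o a (D b) = monMul lam1 (o a b) + mapCoeff D (o a b)
  v_add_left : ∀ a b c : A, v (a + b) c = v a c + v b c
  v_smul_left : ∀ (r : ℂ) (a b : A), v (r • a) b = r • v a b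
  v_add_right : ∀ a b c : A, v a (b + c) = v a b + v a c
  v_smul_right : ∀ (r : ℂ) (a b : A), v a (r • b) = r • v a b
  v_sesq_left : ∀ a b : A, v (D a) b = -(monMul lam1 (v a b))
  v_sesq_right : ∀ a b : A, v a (D b) = monMul lam1 (v a b) + mapCoeff D (v a b)
  v_skew : ∀ a b : A, v a b = -(sub1 D (v b a))
  ns1 : ∀ a b c : A,
    opL D o (Xv 0 + Xv 1) 0 (renameV (fun _ => (0 : Fin 2)) (o a b)) c
      - opR D o (Xv 0) 0 a (renameV (fun _ => (1 : Fin 2)) (o b c))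
      - opL D o (Xv 0 + Xv 1) 0 (renameV (fun _ => (1 : Fin 2)) (o b a)) c
      + opR D o (Xv 1) 0 b (renameV (fun _ => (0 : Fin 2)) (o a c))
      + opL D o (Xv 0 + Xv 1) 0 (renameV (fun _ => (0 : Fin 2)) (v a b)) c = 0
  ns2 : ∀ a b c : A,
    opR D v (Xv 0) 0 a (renameV (fun _ => (1 : Fin 2)) (lieNS D o v b c))
      - opL D v (Xv 0 + Xv 1) 0 (renameV (fun _ => (0 : Fin 2)) (lieNS D o v a b)) c
      - opR D v (Xv 1) 0 b (renameV (fun _ => (0 : Fin 2)) (lieNS D o v a c))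
      + opR D o (Xv 0) 0 a (renameV (fun _ => (1 : Fin 2)) (v b c))
      - opR D o (Xv 1) 0 b (renameV (fun _ => (0 : Fin 2)) (v a c))
      + opR D o (-(Xv 0) - Xv 1) (-1) c (renameV (fun _ => (0 : Fin 2)) (v a b)) = 0

/-- `(A, ≻_λ, ≺_λ, ⋎_λ)` is a conformal NS-algebra. -/
structure IsConfNS (D : A →ₗ[ℂ] A) (su pr cu : A → A → MP 1 A) : Prop where
  su_add_left : ∀ a b c : A, su (a + b) c = su a c + su b c
  su_smul_left : ∀ (r : ℂ) (a b : A), su (r • a) b = r • su a b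
  su_add_right : ∀ a b c : A, su a (b + c) = su a b + su a c
  su_smul_right : ∀ (r : ℂ) (a b : A), su a (r • b) = r • su a b
  su_sesq_left : ∀ a b : A, su (D a) b = -(monMul lam1 (su a b))
  su_sesq_right : ∀ a b : A, su a (D b) = monMul lam1 (su a b) + mapCoeff D (su a b)
  pr_add_left : ∀ a b c : A, pr (a + b) c = pr a c + pr b c
  pr_smul_left : ∀ (r : ℂ) (a b : A), pr (r • a) b = r • pr a b
  pr_add_right : ∀ a b c : A, pr a (b + c) = pr a b + pr a c
  pr_smul_right : ∀ (r : ℂ) (a b : A), pr a (r • b) = r • pr a b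
  pr_sesq_left : ∀ a b : A, pr (D a) b = -(monMul lam1 (pr a b))
  pr_sesq_right : ∀ a b : A, pr a (D b) = monMul lam1 (pr a b) + mapCoeff D (pr a b)
  cu_add_left : ∀ a b c : A, cu (a + b) c = cu a c + cu b c
  cu_smul_left : ∀ (r : ℂ) (a b : A), cu (r • a) b = r • cu a b
  cu_add_right : ∀ a b c : A, cu a (b + c) = cu a b + cu a c
  cu_smul_right : ∀ (r : ℂ) (a b : A), cu a (r • b) = r • cu a b
  cu_sesq_left : ∀ a b : A, cu (D a) b = -(monMul lam1 (cu a b))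
  cu_sesq_right : ∀ a b : A, cu a (D b) = monMul lam1 (cu a b) + mapCoeff D (cu a b)
  ax1 : ∀ x y z : A,
    opR D su (Xv 0) 0 x (renameV (fun _ => (1 : Fin 2)) (su y z)) =
      opL D su (Xv 0 + Xv 1) 0
        (renameV (fun _ => (0 : Fin 2)) (su x y + pr x y + cu x y)) z
  ax2 : ∀ x y z : A,
    opR D pr (Xv 0) 0 x (renameV (fun _ => (1 : Fin 2)) (su y z + pr y z + cu y z)) =
      opL D pr (Xv 0 + Xv 1) 0 (renameV (fun _ => (0 : Fin 2)) (pr x y)) z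
  ax3 : ∀ x y z : A,
    opR D su (Xv 0) 0 x (renameV (fun _ => (1 : Fin 2)) (pr y z)) =
      opL D pr (Xv 0 + Xv 1) 0 (renameV (fun _ => (0 : Fin 2)) (su x y)) z
  ax4 : ∀ x y z : A,
    opR D su (Xv 0) 0 x (renameV (fun _ => (1 : Fin 2)) (cu y z)) -
        opL D cu (Xv 0 + Xv 1) 0
          (renameV (fun _ => (0 : Fin 2)) (su x y + pr x y + cu x y)) z =
      opL D pr (Xv 0 + Xv 1) 0 (renameV (fun _ => (0 : Fin 2)) (cu x y)) z -
        opR D cu (Xv 0) 0 x (renameV (fun _ => (1 : Fin 2)) (su y z + pr y z + cu y z))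

/-- `N` is a Nijenhuis operator on the Lie conformal algebra `(A, D, br)`. -/
def IsNijenhuis (D : A →ₗ[ℂ] A) (br : A → A → MP 1 A) (N : A →ₗ[ℂ] A) : Prop :=
  (∀ a : A, N (D a) = D (N a)) ∧
  ∀ a b : A, br (N a) (N b) =
    mapCoeff N (br (N a) b + br a (N b) - mapCoeff N (br a b))

/-- The deformed bracket `[a_λ b]_N`. -/
def deformBr (br : A → A → MP 1 A) (N : A →ₗ[ℂ] A) : A → A → MP 1 A :=
  fun a b => br (N a) b + br a (N b) - mapCoeff N (br a b)

end NS

/- ------------------------  cochains  ------------------------ -/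

/-- `RawC n A M` : the underlying maps of cochains in `C^{n+1}(A, M)`:
`n+1` arguments from `A`, values in `M`-valued polynomials in `n` variables. -/
abbrev RawC (n : ℕ) (A : Type*) (M : Type*) [AddCommGroup M] : Type _ :=
  (Fin (n + 1) → A) → MP n M

section CochainDefs

variable [AddCommGroup A] [Module ℂ A] [AddCommGroup M] [Module ℂ M]

/-- The scalar-polynomial part of the expression for `λ_t`, where the last
variable is replaced by `λ† = -λ₀ - ⋯ - λ_{N-1} - ∂`. -/
def exprQ {N : ℕ} (t : Fin (N + 1)) : MP N ℂ :=
  if h : t = Fin.last N then -(∑ i : Fin N, Xv i) else Xv (t.castPred h)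

/-- The `∂`-coefficient of the expression for `λ_t`. -/
def exprC {N : ℕ} (t : Fin (N + 1)) : ℂ :=
  if t = Fin.last N then -1 else 0

/-- `f` is a cochain in `C^{n+1}(A, M)` (conformal sesquilinearity, multilinearity,
and skew-symmetry with the substitution `λ_{last} ↦ λ†`). -/
structure IsCochain {n : ℕ} (DA : A →ₗ[ℂ] A) (DM : M →ₗ[ℂ] M) (f : RawC n A M) :
    Prop where
  map_add : ∀ (a : Fin (n + 1) → A) (i : Fin (n + 1)) (x y : A),
    f (Function.update a i (x + y)) =
      f (Function.update a i x) + f (Function.update a i y)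
  map_smul : ∀ (a : Fin (n + 1) → A) (i : Fin (n + 1)) (r : ℂ) (x : A),
    f (Function.update a i (r • x)) = r • f (Function.update a i x)
  sesq : ∀ (a : Fin (n + 1) → A) (i : Fin n),
    f (Function.update a i.castSucc (DA (a i.castSucc))) =
      -(monMul (Finsupp.single i 1) (f a))
  sesq_last : ∀ a : Fin (n + 1) → A,
    f (Function.update a (Fin.last n) (DA (a (Fin.last n)))) =
      (∑ i : Fin n, monMul (Finsupp.single i 1) (f a)) + mapCoeff DM (f a)
  skew : ∀ (σ : Equiv.Perm (Fin (n + 1))) (a : Fin (n + 1) → A),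
    f a = ((Equiv.Perm.sign σ : ℤˣ) : ℤ) •
      substFun DM (fun j : Fin n => exprQ (σ j.castSucc))
        (fun j : Fin n => exprC (σ j.castSucc)) (f (a ∘ σ))

/-- `(t, N-t)`-unshuffles : permutations strictly increasing on the first `t`
positions and on the remaining positions. -/
def IsUnsh {N : ℕ} (t : ℕ) (σ : Equiv.Perm (Fin N)) : Prop :=
  ∀ i j : Fin N, i < j → (j.val < t ∨ t ≤ i.val) → σ i < σ j

/-- The `⋄`-product (unshuffle-sum insertion) of cochains:
`f ∈ C^{p+1}(A,A)`, `g ∈ C^{q+1}(A,A)`, `f⋄g ∈ C^{p+q+1}(A,A)`. -/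
def diamond {p q : ℕ} (DA : A →ₗ[ℂ] A) (f : RawC p A A) (g : RawC q A A) :
    RawC (p + q) A A := fun a =>
  ∑ σ ∈ Finset.univ.filter (fun σ : Equiv.Perm (Fin (p + q + 1)) => IsUnsh (q + 1) σ),
    ((Equiv.Perm.sign σ : ℤˣ) : ℤ) •
      substFun DA
        (fun v : Fin (p + q) =>
          if v.val = q then
            ∑ i : Fin (q + 1), exprQ (σ (Fin.castLE (by omega) i))
          else exprQ (σ v.castSucc))
        (fun v : Fin (p + q) =>
          if v.val = q then
            ∑ i : Fin (q + 1), exprC (σ (Fin.castLE (by omega) i))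
          else exprC (σ v.castSucc))
        ((g fun i : Fin (q + 1) => a (σ (Fin.castLE (by omega) i))).sum fun β x =>
          monMul
            (Finsupp.mapDomain
              (fun i : Fin q => (Fin.cast (by omega) (Fin.castAdd p i) : Fin (p + q))) β)
            (renameV (fun j : Fin p => (Fin.cast (by omega) (Fin.natAdd q j) : Fin (p + q)))
              (f (Fin.cons x fun j : Fin p =>
                a (σ (Fin.cast (by omega) (Fin.natAdd (q + 1) j)))))))

/-- Transport a raw cochain along an equality of degrees. -/
def castRaw {m n : ℕ} (h : m = n) (f : RawC m A M) : RawC n A M := h ▸ f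

/-- The Nijenhuis–Richardson bracket `[f,g] = f⋄g - (-1)^{pq} g⋄f`. -/
def nr {p q : ℕ} (DA : A →ₗ[ℂ] A) (f : RawC p A A) (g : RawC q A A) :
    RawC (p + q) A A :=
  diamond DA f g - ((-1 : ℤ)) ^ (p * q) • castRaw (Nat.add_comm q p) (diamond DA g f)

end CochainDefs

section Bidegree

variable [AddCommGroup A₁] [Module ℂ A₁] [AddCommGroup A₂] [Module ℂ A₂]

/-- `x` is a pure element: in `A₁` (if `b`) or in `A₂` (if `¬b`). -/
def IsPure (x : A₁ × A₂) (b : Bool) : Prop :=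
  if b then x.2 = 0 else x.1 = 0

/-- `f ∈ C^{n+1}(A₁⊕A₂, A₁⊕A₂)` has bidegree `k|l`. -/
def HasBidegree {n : ℕ} (f : RawC n (A₁ × A₂) (A₁ × A₂)) (k l : ℤ) : Prop :=
  k + l = (n : ℤ) ∧
  ∀ (P : Fin (n + 1) → Bool) (a : Fin (n + 1) → A₁ × A₂),
    (∀ i, IsPure (a i) (P i)) →
    ((((Finset.univ.filter fun i => P i = true).card : ℤ) = k + 1 →
        ∀ β, ((f a) β).2 = 0) ∧
      ((((Finset.univ.filter fun i => P i = true).card : ℤ) = k) →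
        ∀ β, ((f a) β).1 = 0) ∧
      (((((Finset.univ.filter fun i => P i = true).card : ℤ) ≠ k + 1) ∧
        (((Finset.univ.filter fun i => P i = true).card : ℤ) ≠ k)) → f a = 0))

/-- The lift of `f ∈ C^{n+1}(A₂, A₁)` to a cochain on `A₁ ⊕ A₂`. -/
def liftC {n : ℕ} (f : RawC n A₂ A₁) : RawC n (A₁ × A₂) (A₁ × A₂) :=
  fun x => Finsupp.mapRange (fun a => (a, (0 : A₂))) rfl (f fun i => (x i).2)

/-- Recover `f ∈ C^{n+1}(A₂, A₁)` from (a lift of) a cochain on `A₁ ⊕ A₂`. -/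
def downC {n : ℕ} (g : RawC n (A₁ × A₂) (A₁ × A₂)) : RawC n A₂ A₁ :=
  fun v => Finsupp.mapRange Prod.fst rfl (g fun i => ((0 : A₁), v i))

/-- The lift of a `ℂ[∂]`-module homomorphism `H : A₂ → A₁` as a `1`-cochain on
`A₁ ⊕ A₂`. -/
def hatHom (H : A₂ →ₗ[ℂ] A₁) : RawC 0 (A₁ × A₂) (A₁ × A₂) :=
  fun x => Finsupp.single 0 (H ((x 0).2), (0 : A₂))

/-- `H : A₂ → A₁` viewed as an element of `C^1(A₂, A₁)`. -/
def hatC1 (H : A₂ →ₗ[ℂ] A₁) : RawC 0 A₂ A₁ :=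
  fun v => Finsupp.single 0 (H (v 0))

/-- The structure map of a λ-bracket as a 2-cochain. -/
def toC2 {A : Type*} [AddCommGroup A] (br : A → A → MP 1 A) : RawC 1 A A :=
  fun a => br (a 0) (a 1)

/-- `l₁ = d_{μ̂₂}` on `C^*(A₂, A₁)`. -/
def ell1 (DA : (A₁ × A₂) →ₗ[ℂ] (A₁ × A₂)) (mu2 : RawC 1 (A₁ × A₂) (A₁ × A₂))
    {n : ℕ} (f : RawC n A₂ A₁) : RawC (n + 1) A₂ A₁ :=
  downC (castRaw (show 1 + n = n + 1 by omega) (nr DA mu2 (liftC f)))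

/-- `l₂ = [·,·]_{μ̂₁}` on `C^*(A₂, A₁)`. -/
def ell2 (DA : (A₁ × A₂) →ₗ[ℂ] (A₁ × A₂)) (mu1 : RawC 1 (A₁ × A₂) (A₁ × A₂))
    {m n : ℕ} (f : RawC m A₂ A₁) (g : RawC n A₂ A₁) : RawC (m + n + 1) A₂ A₁ :=
  ((-1 : ℤ)) ^ m •
    downC (castRaw (show 1 + m + n = m + n + 1 by omega)
      (nr DA (nr DA mu1 (liftC f)) (liftC g)))

/-- `l₃ = [·,·,·]_{φ̂₁}` on `C^*(A₂, A₁)`. -/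
def ell3 (DA : (A₁ × A₂) →ₗ[ℂ] (A₁ × A₂)) (phi1 : RawC 1 (A₁ × A₂) (A₁ × A₂))
    {m n k : ℕ} (f : RawC m A₂ A₁) (g : RawC n A₂ A₁) (h : RawC k A₂ A₁) :
    RawC (m + n + k + 1) A₂ A₁ :=
  ((-1 : ℤ)) ^ n •
    downC (castRaw (show 1 + m + n + k = m + n + k + 1 by omega)
      (nr DA (nr DA (nr DA phi1 (liftC f)) (liftC g)) (liftC h)))

/-- `Π` is a twilled Lie conformal algebra structure on `A₁ ⊕ A₂`. -/
def IsTwilledStr (DA : (A₁ × A₂) →ₗ[ℂ] (A₁ × A₂))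
    (Pi : RawC 1 (A₁ × A₂) (A₁ × A₂)) : Prop :=
  IsCochain DA DA Pi ∧ nr DA Pi Pi = 0 ∧
    ∃ m1 m2 : RawC 1 (A₁ × A₂) (A₁ × A₂),
      HasBidegree m1 1 0 ∧ HasBidegree m2 0 1 ∧ Pi = m1 + m2

/-- `Π` is a quasi-twilled Lie conformal algebra structure on `A₁ ⊕ A₂`. -/
def IsQuasiTwilledStr (DA : (A₁ × A₂) →ₗ[ℂ] (A₁ × A₂))
    (Pi : RawC 1 (A₁ × A₂) (A₁ × A₂)) : Prop :=
  IsCochain DA DA Pi ∧ nr DA Pi Pi = 0 ∧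
    ∃ p1 m1 m2 : RawC 1 (A₁ × A₂) (A₁ × A₂),
      HasBidegree p1 2 (-1) ∧ HasBidegree m1 1 0 ∧ HasBidegree m2 0 1 ∧
        Pi = p1 + m1 + m2

end Bidegree

section Twist

variable [AddCommGroup A] [Module ℂ A]

/-- The twisting `Π^H = e^{X_Ĥ}(Π)` of a `2`-cochain by (the lift of) a
`ℂ[∂]`-module homomorphism. -/
def twist (DA : A →ₗ[ℂ] A) (Pi : RawC 1 A A) (hH : RawC 0 A A) : RawC 1 A A :=
  Pi + nr DA Pi hH + (2 : ℂ)⁻¹ • nr DA (nr DA Pi hH) hH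
    + (6 : ℂ)⁻¹ • nr DA (nr DA (nr DA Pi hH) hH) hH

end Twist

end LCAF

namespace LCAF

section GradedStructures

variable {A₁ A₂ : Type*} [AddCommGroup A₁] [Module ℂ A₁] [AddCommGroup A₂] [Module ℂ A₂]

/-- The subspace of `⊕ₙ RawC n A₂ A₁` cut out by `P` (placing `RawC n` in degree
`n+1`), equipped with `d` and `br`, is a differential graded Lie algebra. -/
structure IsDGLAOn
    (P : ∀ {n : ℕ}, RawC n A₂ A₁ → Prop)
    (d : ∀ {n : ℕ}, RawC n A₂ A₁ → RawC (n + 1) A₂ A₁)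
    (br : ∀ {m n : ℕ}, RawC m A₂ A₁ → RawC n A₂ A₁ → RawC (m + n + 1) A₂ A₁) :
    Prop where
  mem_zero : ∀ {n : ℕ}, P (0 : RawC n A₂ A₁)
  mem_add : ∀ {n : ℕ} (f g : RawC n A₂ A₁), P f → P g → P (f + g)
  mem_smul : ∀ {n : ℕ} (r : ℂ) (f : RawC n A₂ A₁), P f → P (r • f)
  mem_d : ∀ {n : ℕ} (f : RawC n A₂ A₁), P f → P (d f)
  mem_br : ∀ {m n : ℕ} (f : RawC m A₂ A₁) (g : RawC n A₂ A₁), P f → P g → P (br f g)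
  d_add : ∀ {n : ℕ} (f g : RawC n A₂ A₁), P f → P g → d (f + g) = d f + d g
  d_smul : ∀ {n : ℕ} (r : ℂ) (f : RawC n A₂ A₁), P f → d (r • f) = r • d f
  br_add_left : ∀ {m n : ℕ} (f f' : RawC m A₂ A₁) (g : RawC n A₂ A₁),
    P f → P f' → P g → br (f + f') g = br f g + br f' g
  br_smul_left : ∀ {m n : ℕ} (r : ℂ) (f : RawC m A₂ A₁) (g : RawC n A₂ A₁),
    P f → P g → br (r • f) g = r • br f g
  br_add_right : ∀ {m n : ℕ} (f : RawC m A₂ A₁) (g g' : RawC n A₂ A₁),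
    P f → P g → P g' → br f (g + g') = br f g + br f g'
  br_smul_right : ∀ {m n : ℕ} (r : ℂ) (f : RawC m A₂ A₁) (g : RawC n A₂ A₁),
    P f → P g → br f (r • g) = r • br f g
  d_squared : ∀ {n : ℕ} (f : RawC n A₂ A₁), P f → d (d f) = 0
  skew : ∀ {m n : ℕ} (f : RawC m A₂ A₁) (g : RawC n A₂ A₁), P f → P g →
    br f g = ((-1 : ℤ)) ^ ((m + 1) * (n + 1) + 1) •
      castRaw (show n + m + 1 = m + n + 1 by omega) (br g f)
  leibniz : ∀ {m n : ℕ} (f : RawC m A₂ A₁) (g : RawC n A₂ A₁), P f → P g →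
    castRaw (show m + n + 1 + 1 = m + n + 2 by omega) (d (br f g)) =
      castRaw (show m + 1 + n + 1 = m + n + 2 by omega) (br (d f) g) +
      ((-1 : ℤ)) ^ (m + 1) •
        castRaw (show m + (n + 1) + 1 = m + n + 2 by omega) (br f (d g))
  jacobi : ∀ {m n k : ℕ} (f : RawC m A₂ A₁) (g : RawC n A₂ A₁) (h : RawC k A₂ A₁),
    P f → P g → P h →
    castRaw (show m + (n + k + 1) + 1 = m + n + k + 2 by omega) (br f (br g h)) =
      castRaw (show m + n + 1 + k + 1 = m + n + k + 2 by omega) (br (br f g) h) +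
      ((-1 : ℤ)) ^ ((m + 1) * (n + 1)) •
        castRaw (show n + (m + k + 1) + 1 = m + n + k + 2 by omega) (br g (br f h))

/-- The subspace of `⊕ₙ RawC n A₂ A₁` cut out by `P` (placing `RawC n` in degree
`n+1`), with operations `l₁, l₂, l₃` (and `lᵢ = 0` for `i ≥ 4`), is an
`L∞`-algebra: graded skew-symmetry and the higher Jacobi identities
`∑_{i+j=n+1} (-1)^i ∑_{σ ∈ Sh(i,n-i)} χ(σ) l_j(l_i(x_{σ(1)},…),…) = 0`
(only `n = 1, …, 5` are nontrivial since `lᵢ = 0` for `i ≥ 4`). -/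
structure IsLInftyOn
    (P : ∀ {n : ℕ}, RawC n A₂ A₁ → Prop)
    (l1 : ∀ {n : ℕ}, RawC n A₂ A₁ → RawC (n + 1) A₂ A₁)
    (l2 : ∀ {m n : ℕ}, RawC m A₂ A₁ → RawC n A₂ A₁ → RawC (m + n + 1) A₂ A₁)
    (l3 : ∀ {m n k : ℕ}, RawC m A₂ A₁ → RawC n A₂ A₁ → RawC k A₂ A₁ →
      RawC (m + n + k + 1) A₂ A₁) : Prop where
  mem_zero : ∀ {n : ℕ}, P (0 : RawC n A₂ A₁)
  mem_add : ∀ {n : ℕ} (f g : RawC n A₂ A₁), P f → P g → P (f + g)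
  mem_smul : ∀ {n : ℕ} (r : ℂ) (f : RawC n A₂ A₁), P f → P (r • f)
  mem_l1 : ∀ {n : ℕ} (f : RawC n A₂ A₁), P f → P (l1 f)
  mem_l2 : ∀ {m n : ℕ} (f : RawC m A₂ A₁) (g : RawC n A₂ A₁), P f → P g → P (l2 f g)
  mem_l3 : ∀ {m n k : ℕ} (f : RawC m A₂ A₁) (g : RawC n A₂ A₁) (h : RawC k A₂ A₁),
    P f → P g → P h → P (l3 f g h)
  l1_add : ∀ {n : ℕ} (f g : RawC n A₂ A₁), P f → P g → l1 (f + g) = l1 f + l1 g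
  l1_smul : ∀ {n : ℕ} (r : ℂ) (f : RawC n A₂ A₁), P f → l1 (r • f) = r • l1 f
  l2_add_left : ∀ {m n : ℕ} (f f' : RawC m A₂ A₁) (g : RawC n A₂ A₁),
    P f → P f' → P g → l2 (f + f') g = l2 f g + l2 f' g
  l2_smul_left : ∀ {m n : ℕ} (r : ℂ) (f : RawC m A₂ A₁) (g : RawC n A₂ A₁),
    P f → P g → l2 (r • f) g = r • l2 f g
  l2_add_right : ∀ {m n : ℕ} (f : RawC m A₂ A₁) (g g' : RawC n A₂ A₁),
    P f → P g → P g' → l2 f (g + g') = l2 f g + l2 f g'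
  l2_smul_right : ∀ {m n : ℕ} (r : ℂ) (f : RawC m A₂ A₁) (g : RawC n A₂ A₁),
    P f → P g → l2 f (r • g) = r • l2 f g
  l3_add₁ : ∀ {m n k : ℕ} (f f' : RawC m A₂ A₁) (g : RawC n A₂ A₁) (h : RawC k A₂ A₁),
    P f → P f' → P g → P h → l3 (f + f') g h = l3 f g h + l3 f' g h
  l3_smul₁ : ∀ {m n k : ℕ} (r : ℂ) (f : RawC m A₂ A₁) (g : RawC n A₂ A₁)
    (h : RawC k A₂ A₁), P f → P g → P h → l3 (r • f) g h = r • l3 f g h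
  l3_add₂ : ∀ {m n k : ℕ} (f : RawC m A₂ A₁) (g g' : RawC n A₂ A₁) (h : RawC k A₂ A₁),
    P f → P g → P g' → P h → l3 f (g + g') h = l3 f g h + l3 f g' h
  l3_smul₂ : ∀ {m n k : ℕ} (r : ℂ) (f : RawC m A₂ A₁) (g : RawC n A₂ A₁)
    (h : RawC k A₂ A₁), P f → P g → P h → l3 f (r • g) h = r • l3 f g h
  l3_add₃ : ∀ {m n k : ℕ} (f : RawC m A₂ A₁) (g : RawC n A₂ A₁) (h h' : RawC k A₂ A₁),
    P f → P g → P h → P h' → l3 f g (h + h') = l3 f g h + l3 f g h'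
  l3_smul₃ : ∀ {m n k : ℕ} (r : ℂ) (f : RawC m A₂ A₁) (g : RawC n A₂ A₁)
    (h : RawC k A₂ A₁), P f → P g → P h → l3 f g (r • h) = r • l3 f g h
  skew2 : ∀ {m n : ℕ} (f : RawC m A₂ A₁) (g : RawC n A₂ A₁), P f → P g →
    l2 f g = ((-1 : ℤ)) ^ ((m + 1) * (n + 1) + 1) •
      castRaw (show n + m + 1 = m + n + 1 by omega) (l2 g f)
  skew3a : ∀ {m n k : ℕ} (f : RawC m A₂ A₁) (g : RawC n A₂ A₁) (h : RawC k A₂ A₁),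
    P f → P g → P h →
    l3 f g h = ((-1 : ℤ)) ^ ((m + 1) * (n + 1) + 1) •
      castRaw (show n + m + k + 1 = m + n + k + 1 by omega) (l3 g f h)
  skew3b : ∀ {m n k : ℕ} (f : RawC m A₂ A₁) (g : RawC n A₂ A₁) (h : RawC k A₂ A₁),
    P f → P g → P h →
    l3 f g h = ((-1 : ℤ)) ^ ((n + 1) * (k + 1) + 1) •
      castRaw (show m + k + n + 1 = m + n + k + 1 by omega) (l3 f h g)
  jac1 : ∀ {n : ℕ} (f : RawC n A₂ A₁), P f → l1 (l1 f) = 0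
  jac2 : ∀ {m n : ℕ} (f : RawC m A₂ A₁) (g : RawC n A₂ A₁), P f → P g →
    castRaw (show m + n + 1 + 1 = m + n + 2 by omega) (l1 (l2 f g))
      - castRaw (show m + 1 + n + 1 = m + n + 2 by omega) (l2 (l1 f) g)
      + ((-1 : ℤ)) ^ ((m + 1) * (n + 1)) •
          castRaw (show n + 1 + m + 1 = m + n + 2 by omega) (l2 (l1 g) f)
      = 0
  jac3 : ∀ {m n k : ℕ} (f : RawC m A₂ A₁) (g : RawC n A₂ A₁) (h : RawC k A₂ A₁),
    P f → P g → P h →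
    -(castRaw (show m + 1 + n + k + 1 = m + n + k + 2 by omega) (l3 (l1 f) g h))
      + ((-1 : ℤ)) ^ ((m + 1) * (n + 1)) •
          castRaw (show n + 1 + m + k + 1 = m + n + k + 2 by omega) (l3 (l1 g) f h)
      - ((-1 : ℤ)) ^ ((k + 1) * ((m + 1) + (n + 1))) •
          castRaw (show k + 1 + m + n + 1 = m + n + k + 2 by omega) (l3 (l1 h) f g)
      + castRaw (show m + n + 1 + k + 1 = m + n + k + 2 by omega) (l2 (l2 f g) h)
      - ((-1 : ℤ)) ^ ((n + 1) * (k + 1)) •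
          castRaw (show m + k + 1 + n + 1 = m + n + k + 2 by omega) (l2 (l2 f h) g)
      + ((-1 : ℤ)) ^ ((m + 1) * ((n + 1) + (k + 1))) •
          castRaw (show n + k + 1 + m + 1 = m + n + k + 2 by omega) (l2 (l2 g h) f)
      - castRaw (show m + n + k + 1 + 1 = m + n + k + 2 by omega) (l1 (l3 f g h))
      = 0
  jac4 : ∀ {m n k l : ℕ} (f : RawC m A₂ A₁) (g : RawC n A₂ A₁) (h : RawC k A₂ A₁)
    (e : RawC l A₂ A₁), P f → P g → P h → P e →
    castRaw (show m + n + 1 + k + l + 1 = m + n + k + l + 2 by omega) (l3 (l2 f g) h e)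
      - ((-1 : ℤ)) ^ ((n + 1) * (k + 1)) •
          castRaw (show m + k + 1 + n + l + 1 = m + n + k + l + 2 by omega)
            (l3 (l2 f h) g e)
      + ((-1 : ℤ)) ^ ((l + 1) * ((n + 1) + (k + 1))) •
          castRaw (show m + l + 1 + n + k + 1 = m + n + k + l + 2 by omega)
            (l3 (l2 f e) g h)
      + ((-1 : ℤ)) ^ ((m + 1) * ((n + 1) + (k + 1))) •
          castRaw (show n + k + 1 + m + l + 1 = m + n + k + l + 2 by omega)
            (l3 (l2 g h) f e)
      - ((-1 : ℤ)) ^ ((m + 1) * (n + 1) + (m + 1) * (l + 1) + (k + 1) * (l + 1)) •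
          castRaw (show n + l + 1 + m + k + 1 = m + n + k + l + 2 by omega)
            (l3 (l2 g e) f h)
      + ((-1 : ℤ)) ^ (((m + 1) + (n + 1)) * ((k + 1) + (l + 1))) •
          castRaw (show k + l + 1 + m + n + 1 = m + n + k + l + 2 by omega)
            (l3 (l2 h e) f g)
      - castRaw (show m + n + k + 1 + l + 1 = m + n + k + l + 2 by omega)
          (l2 (l3 f g h) e)
      + ((-1 : ℤ)) ^ ((k + 1) * (l + 1)) •
          castRaw (show m + n + l + 1 + k + 1 = m + n + k + l + 2 by omega)
            (l2 (l3 f g e) h)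
      - ((-1 : ℤ)) ^ ((n + 1) * ((k + 1) + (l + 1))) •
          castRaw (show m + k + l + 1 + n + 1 = m + n + k + l + 2 by omega)
            (l2 (l3 f h e) g)
      + ((-1 : ℤ)) ^ ((m + 1) * ((n + 1) + (k + 1) + (l + 1))) •
          castRaw (show n + k + l + 1 + m + 1 = m + n + k + l + 2 by omega)
            (l2 (l3 g h e) f)
      = 0
  jac5 : ∀ {a b c d e : ℕ} (x1 : RawC a A₂ A₁) (x2 : RawC b A₂ A₁) (x3 : RawC c A₂ A₁)
    (x4 : RawC d A₂ A₁) (x5 : RawC e A₂ A₁), P x1 → P x2 → P x3 → P x4 → P x5 →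
    castRaw (show a + b + c + 1 + d + e + 1 = a + b + c + d + e + 2 by omega)
        (l3 (l3 x1 x2 x3) x4 x5)
      - ((-1 : ℤ)) ^ ((c + 1) * (d + 1)) •
          castRaw (show a + b + d + 1 + c + e + 1 = a + b + c + d + e + 2 by omega)
            (l3 (l3 x1 x2 x4) x3 x5)
      + ((-1 : ℤ)) ^ ((e + 1) * ((c + 1) + (d + 1))) •
          castRaw (show a + b + e + 1 + c + d + 1 = a + b + c + d + e + 2 by omega)
            (l3 (l3 x1 x2 x5) x3 x4)
      + ((-1 : ℤ)) ^ ((b + 1) * ((c + 1) + (d + 1))) •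
          castRaw (show a + c + d + 1 + b + e + 1 = a + b + c + d + e + 2 by omega)
            (l3 (l3 x1 x3 x4) x2 x5)
      - ((-1 : ℤ)) ^ ((b + 1) * (c + 1) + (b + 1) * (e + 1) + (d + 1) * (e + 1)) •
          castRaw (show a + c + e + 1 + b + d + 1 = a + b + c + d + e + 2 by omega)
            (l3 (l3 x1 x3 x5) x2 x4)
      + ((-1 : ℤ)) ^ (((b + 1) + (c + 1)) * ((d + 1) + (e + 1))) •
          castRaw (show a + d + e + 1 + b + c + 1 = a + b + c + d + e + 2 by omega)
            (l3 (l3 x1 x4 x5) x2 x3)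
      - ((-1 : ℤ)) ^ ((a + 1) * ((b + 1) + (c + 1) + (d + 1))) •
          castRaw (show b + c + d + 1 + a + e + 1 = a + b + c + d + e + 2 by omega)
            (l3 (l3 x2 x3 x4) x1 x5)
      + ((-1 : ℤ)) ^ ((a + 1) * ((b + 1) + (c + 1) + (e + 1)) + (d + 1) * (e + 1)) •
          castRaw (show b + c + e + 1 + a + d + 1 = a + b + c + d + e + 2 by omega)
            (l3 (l3 x2 x3 x5) x1 x4)
      - ((-1 : ℤ)) ^ ((a + 1) * ((b + 1) + (d + 1) + (e + 1)) + (c + 1) * ((d + 1) + (e + 1))) •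
          castRaw (show b + d + e + 1 + a + c + 1 = a + b + c + d + e + 2 by omega)
            (l3 (l3 x2 x4 x5) x1 x3)
      + ((-1 : ℤ)) ^ (((a + 1) + (b + 1)) * ((c + 1) + (d + 1) + (e + 1))) •
          castRaw (show c + d + e + 1 + a + b + 1 = a + b + c + d + e + 2 by omega)
            (l3 (l3 x3 x4 x5) x1 x2)
      = 0

end GradedStructures

section TwistHom

variable {A₁ A₂ : Type*} [AddCommGroup A₁] [Module ℂ A₁] [AddCommGroup A₂] [Module ℂ A₂]

/-- `e^Ĥ = Id + Ĥ` as a linear endomorphism of `A₁ ⊕ A₂`. -/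
def eHp (H : A₂ →ₗ[ℂ] A₁) : (A₁ × A₂) →ₗ[ℂ] (A₁ × A₂) :=
  LinearMap.id + (LinearMap.inl ℂ A₁ A₂).comp (H.comp (LinearMap.snd ℂ A₁ A₂))

/-- `e^{-Ĥ} = Id - Ĥ` as a linear endomorphism of `A₁ ⊕ A₂`. -/
def eHm (H : A₂ →ₗ[ℂ] A₁) : (A₁ × A₂) →ₗ[ℂ] (A₁ × A₂) :=
  LinearMap.id - (LinearMap.inl ℂ A₁ A₂).comp (H.comp (LinearMap.snd ℂ A₁ A₂))

end TwistHom

end LCAF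

namespace LCAF


/- ------------------------------------------------------------------
Auxiliary lemmas for Statement 16.
------------------------------------------------------------------- -/

set_option linter.unusedSectionVars false

section S16Aux

variable {M : Type*} [AddCommGroup M] [Module ℂ M] {k : ℕ}

lemma monMul_single (α β : Fin k →₀ ℕ) (m : M) :
    monMul α (Finsupp.single β m) = Finsupp.single (α + β) m :=
  Finsupp.mapDomain_single

lemma monMul_addp (α : Fin k →₀ ℕ) (p q : MP k M) :
    monMul α (p + q) = monMul α p + monMul α q :=
  Finsupp.mapDomain_add

lemma monMul_smulp (α : Fin k →₀ ℕ) (r : ℂ) (p : MP k M) :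
    monMul α (r • p) = r • monMul α p :=
  Finsupp.mapDomain_smul r p

lemma monMul_zerop (α : Fin k →₀ ℕ) : monMul α (0 : MP k M) = 0 :=
  Finsupp.mapDomain_zero

lemma monMul_negp (α : Fin k →₀ ℕ) (p : MP k M) : monMul α (-p) = -(monMul α p) := by
  have h := monMul_addp α (-p) p
  rw [neg_add_cancel, monMul_zerop] at h
  exact eq_neg_of_add_eq_zero_left h.symm

lemma monMul_subp (α : Fin k →₀ ℕ) (p q : MP k M) :
    monMul α (p - q) = monMul α p - monMul α q := by
  rw [sub_eq_add_neg, monMul_addp, monMul_negp, sub_eq_add_neg]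

lemma monMul_zero_exp (p : MP k M) : monMul (0 : Fin k →₀ ℕ) p = p := by
  unfold monMul
  rw [show (fun β : Fin k →₀ ℕ => 0 + β) = id from funext fun β => zero_add β,
    Finsupp.mapDomain_id]

lemma monMul_monMul (α β : Fin k →₀ ℕ) (p : MP k M) :
    monMul α (monMul β p) = monMul (α + β) p := by
  unfold monMul
  rw [← Finsupp.mapDomain_comp]
  apply Finsupp.mapDomain_congr
  intro x _
  simp [Function.comp, add_assoc]

section MapCoeff

variable (g : M →ₗ[ℂ] M)

lemma mapCoeff_single (β : Fin k →₀ ℕ) (m : M) :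
    mapCoeff g (Finsupp.single β m) = Finsupp.single β (g m) :=
  Finsupp.mapRange_single

lemma mapCoeff_addp (p q : MP k M) : mapCoeff g (p + q) = mapCoeff g p + mapCoeff g q :=
  Finsupp.mapRange_add (map_add g) p q

lemma mapCoeff_zerop : mapCoeff g (0 : MP k M) = 0 := Finsupp.mapRange_zero

lemma mapCoeff_smulp (r : ℂ) (p : MP k M) : mapCoeff g (r • p) = r • mapCoeff g p := by
  induction p using Finsupp.induction_linear with
  | zero => simp [mapCoeff_zerop]
  | add f1 f2 h1 h2 => rw [smul_add, mapCoeff_addp, h1, h2, mapCoeff_addp, smul_add]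
  | single a b =>
      simp only [Finsupp.smul_single, mapCoeff_single, map_smul]

lemma mapCoeff_negp (p : MP k M) : mapCoeff g (-p) = -(mapCoeff g p) := by
  have h := mapCoeff_addp g (-p) p
  rw [neg_add_cancel, mapCoeff_zerop] at h
  exact eq_neg_of_add_eq_zero_left h.symm

lemma mapCoeff_subp (p q : MP k M) : mapCoeff g (p - q) = mapCoeff g p - mapCoeff g q := by
  rw [sub_eq_add_neg, mapCoeff_addp, mapCoeff_negp, sub_eq_add_neg]

lemma mapCoeff_monMul (α : Fin k →₀ ℕ) (p : MP k M) :
    mapCoeff g (monMul α p) = monMul α (mapCoeff g p) := by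
  induction p using Finsupp.induction_linear with
  | zero => simp [mapCoeff_zerop, monMul_zerop]
  | add f1 f2 h1 h2 => rw [monMul_addp, mapCoeff_addp, h1, h2, mapCoeff_addp, monMul_addp]
  | single a b => rw [monMul_single, mapCoeff_single, mapCoeff_single, monMul_single]

end MapCoeff

section ScaleP

lemma scaleP_single_q (α : Fin k →₀ ℕ) (r : ℂ) (p : MP k M) :
    scaleP (Finsupp.single α r) p = r • monMul α p := by
  unfold scaleP
  rw [Finsupp.sum_single_index]
  simp

lemma scaleP_addp (q : MP k ℂ) (p p' : MP k M) :
    scaleP q (p + p') = scaleP q p + scaleP q p' := by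
  unfold scaleP
  rw [← Finsupp.sum_add]
  exact Finsupp.sum_congr fun α _ => by rw [monMul_addp, smul_add]

lemma fsum_push {ι N1 N2 : Type*} [AddCommGroup N1] [AddCommGroup N2] (F : N1 → N2)
    (hadd : ∀ a b, F (a + b) = F a + F b) (f : ι →₀ ℂ) (g : ι → ℂ → N1) :
    F (f.sum g) = f.sum fun a b => F (g a b) :=
  map_finsuppSum (AddMonoidHom.mk' F hadd) f g

lemma scaleP_zerop (q : MP k ℂ) : scaleP q (0 : MP k M) = 0 := by
  unfold scaleP
  have : (q.sum fun α r => r • monMul α (0 : MP k M)) = q.sum fun _ _ => (0 : MP k M) :=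
    Finsupp.sum_congr fun α _ => by rw [monMul_zerop, smul_zero]
  rw [this, Finsupp.sum, Finset.sum_const_zero]

lemma scaleP_negp (q : MP k ℂ) (p : MP k M) : scaleP q (-p) = -(scaleP q p) := by
  have h := scaleP_addp q (-p) p
  rw [neg_add_cancel, scaleP_zerop] at h
  exact eq_neg_of_add_eq_zero_left h.symm

lemma scaleP_subp (q : MP k ℂ) (p p' : MP k M) :
    scaleP q (p - p') = scaleP q p - scaleP q p' := by
  rw [sub_eq_add_neg, scaleP_addp, scaleP_negp, sub_eq_add_neg]

lemma scaleP_smulp (q : MP k ℂ) (r : ℂ) (p : MP k M) :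
    scaleP q (r • p) = r • scaleP q p := by
  unfold scaleP
  rw [Finsupp.smul_sum]
  exact Finsupp.sum_congr fun α _ => by rw [monMul_smulp, smul_comm]

lemma scaleP_add_q (q q' : MP k ℂ) (p : MP k M) :
    scaleP (q + q') p = scaleP q p + scaleP q' p :=
  Finsupp.sum_add_index' (fun α => by simp) (fun α r r' => add_smul r r' (monMul α p))

lemma scaleP_zero_q (p : MP k M) : scaleP (0 : MP k ℂ) p = 0 :=
  Finsupp.sum_zero_index

lemma scaleP_neg_q (q : MP k ℂ) (p : MP k M) : scaleP (-q) p = -(scaleP q p) := by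
  have h := scaleP_add_q (-q) q p
  rw [neg_add_cancel, scaleP_zero_q] at h
  exact eq_neg_of_add_eq_zero_left h.symm

lemma scaleP_sub_q (q q' : MP k ℂ) (p : MP k M) :
    scaleP (q - q') p = scaleP q p - scaleP q' p := by
  rw [sub_eq_add_neg, scaleP_add_q, scaleP_neg_q, sub_eq_add_neg]

lemma scaleP_smul_q (r : ℂ) (q : MP k ℂ) (p : MP k M) :
    scaleP (r • q) p = r • scaleP q p := by
  unfold scaleP
  rw [Finsupp.sum_smul_index' (fun α => by simp), Finsupp.smul_sum]
  exact Finsupp.sum_congr fun α s => by rw [smul_eq_mul, mul_smul]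

lemma scaleP_Xv (i : Fin k) (p : MP k M) :
    scaleP (Xv i) p = monMul (Finsupp.single i 1) p := by
  rw [Xv, scaleP_single_q, one_smul]

lemma scaleP_monMul (q : MP k ℂ) (α : Fin k →₀ ℕ) (p : MP k M) :
    scaleP q (monMul α p) = monMul α (scaleP q p) := by
  unfold scaleP
  rw [fsum_push (monMul α) (monMul_addp α) q]
  exact Finsupp.sum_congr fun β r => by
    rw [monMul_monMul, monMul_smulp, monMul_monMul, add_comm β α]

lemma scaleP_scaleP (q q' : MP k ℂ) (p : MP k M) :
    scaleP q (scaleP q' p) = scaleP q' (scaleP q p) := by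
  calc scaleP q (scaleP q' p) = q.sum fun β r => r • monMul β (scaleP q' p) := rfl
    _ = q.sum fun β r => scaleP q' (r • monMul β p) := Finsupp.sum_congr fun β r => by
          rw [scaleP_smulp, scaleP_monMul]
    _ = scaleP q' (q.sum fun β r => r • monMul β p) :=
          (fsum_push (scaleP q') (scaleP_addp q') q _).symm
    _ = scaleP q' (scaleP q p) := rfl

lemma scaleP_mapCoeff (g : M →ₗ[ℂ] M) (q : MP k ℂ) (p : MP k M) :
    scaleP q (mapCoeff g p) = mapCoeff g (scaleP q p) := by
  calc scaleP q (mapCoeff g p) = q.sum fun β r => r • monMul β (mapCoeff g p) := rfl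
    _ = q.sum fun β r => mapCoeff g (r • monMul β p) := Finsupp.sum_congr fun β r => by
          rw [mapCoeff_smulp, mapCoeff_monMul]
    _ = mapCoeff g (q.sum fun β r => r • monMul β p) :=
          (fsum_push (mapCoeff g) (mapCoeff_addp g) q _).symm
    _ = mapCoeff g (scaleP q p) := rfl

end ScaleP

section IterHelpers

variable {X : Type*} [AddCommGroup X] [Module ℂ X]

lemma iter_zerop (f : X → X) (h : f 0 = 0) (n : ℕ) : f^[n] 0 = 0 := by
  induction n with
  | zero => rfl
  | succ n ih => rw [Function.iterate_succ_apply', ih, h]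

lemma iter_addp (f : X → X) (h : ∀ a b, f (a + b) = f a + f b) (n : ℕ) (a b : X) :
    f^[n] (a + b) = f^[n] a + f^[n] b := by
  induction n with
  | zero => rfl
  | succ n ih => rw [Function.iterate_succ_apply', ih, h, Function.iterate_succ_apply',
      Function.iterate_succ_apply']

lemma iter_smulp (f : X → X) (h : ∀ (r : ℂ) a, f (r • a) = r • f a) (n : ℕ) (r : ℂ) (a : X) :
    f^[n] (r • a) = r • f^[n] a := by
  induction n with
  | zero => rfl
  | succ n ih => rw [Function.iterate_succ_apply', ih, h, Function.iterate_succ_apply']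

lemma iter_comm (f g : X → X) (h : ∀ a, f (g a) = g (f a)) (n : ℕ) (a : X) :
    f^[n] (g a) = g (f^[n] a) := by
  induction n with
  | zero => rfl
  | succ n ih => rw [Function.iterate_succ_apply', ih, h, Function.iterate_succ_apply']

end IterHelpers

section Opnd

variable (D : M →ₗ[ℂ] M)

lemma opnd_def (q : MP k ℂ) (c : ℂ) (p : MP k M) :
    opnd D q c p = scaleP q p + c • mapCoeff D p := rfl

lemma opnd_addp (q : MP k ℂ) (c : ℂ) (p p' : MP k M) :
    opnd D q c (p + p') = opnd D q c p + opnd D q c p' := by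
  simp only [opnd_def, scaleP_addp, mapCoeff_addp, smul_add]; abel

lemma opnd_zerop (q : MP k ℂ) (c : ℂ) : opnd D q c (0 : MP k M) = 0 := by
  simp only [opnd_def, scaleP_zerop, mapCoeff_zerop, smul_zero, add_zero]

lemma opnd_smulp (q : MP k ℂ) (c : ℂ) (r : ℂ) (p : MP k M) :
    opnd D q c (r • p) = r • opnd D q c p := by
  simp only [opnd_def, scaleP_smulp, mapCoeff_smulp, smul_add, smul_comm c r]

lemma opnd_monMul (q : MP k ℂ) (c : ℂ) (α : Fin k →₀ ℕ) (p : MP k M) :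
    opnd D q c (monMul α p) = monMul α (opnd D q c p) := by
  simp only [opnd_def, scaleP_monMul, mapCoeff_monMul, monMul_addp, monMul_smulp]

lemma opnd_mapCoeff (q : MP k ℂ) (c : ℂ) (p : MP k M) :
    opnd D q c (mapCoeff D p) = mapCoeff D (opnd D q c p) := by
  simp only [opnd_def, scaleP_mapCoeff, mapCoeff_addp, mapCoeff_smulp]

lemma opnd_opnd (q q' : MP k ℂ) (c c' : ℂ) (p : MP k M) :
    opnd D q c (opnd D q' c' p) = opnd D q' c' (opnd D q c p) := by
  simp only [opnd_def, scaleP_addp, scaleP_smulp, scaleP_scaleP, scaleP_mapCoeff,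
    mapCoeff_addp, mapCoeff_smulp, smul_add, smul_comm c c']
  abel

lemma opnd_add_q (q q' : MP k ℂ) (c c' : ℂ) (p : MP k M) :
    opnd D (q + q') (c + c') p = opnd D q c p + opnd D q' c' p := by
  simp only [opnd_def, scaleP_add_q, add_smul]; abel

lemma opnd_smul_q (r : ℂ) (q : MP k ℂ) (c : ℂ) (p : MP k M) :
    opnd D (r • q) (r * c) p = r • opnd D q c p := by
  simp only [opnd_def, scaleP_smul_q, mul_smul, smul_add]

end Opnd

section SubstFunBasic

variable (D : M →ₗ[ℂ] M) {k' : ℕ}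

lemma substFun_def1 (q : Fin 1 → MP k' ℂ) (c : Fin 1 → ℂ) (p : MP 1 M) :
    substFun D q c p =
      p.sum fun α m => (opnd D (q 0) (c 0))^[α 0] (Finsupp.single 0 m) := by
  unfold substFun
  apply Finsupp.sum_congr
  intro α _
  simp [List.ofFn_succ]

lemma substFun_def2 (q : Fin 2 → MP k' ℂ) (c : Fin 2 → ℂ) (p : MP 2 M) :
    substFun D q c p =
      p.sum fun α m =>
        (opnd D (q 0) (c 0))^[α 0] ((opnd D (q 1) (c 1))^[α 1] (Finsupp.single 0 m)) := by
  unfold substFun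
  apply Finsupp.sum_congr
  intro α _
  simp [List.ofFn_succ]

lemma substFun_single1 (q : Fin 1 → MP k' ℂ) (c : Fin 1 → ℂ) (α : Fin 1 →₀ ℕ) (m : M) :
    substFun D q c (Finsupp.single α m) =
      (opnd D (q 0) (c 0))^[α 0] (Finsupp.single 0 m) := by
  rw [substFun_def1, Finsupp.sum_single_index]
  rw [Finsupp.single_zero, iter_zerop _ (opnd_zerop D _ _)]

lemma substFun_single2 (q : Fin 2 → MP k' ℂ) (c : Fin 2 → ℂ) (α : Fin 2 →₀ ℕ) (m : M) :
    substFun D q c (Finsupp.single α m) =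
      (opnd D (q 0) (c 0))^[α 0] ((opnd D (q 1) (c 1))^[α 1] (Finsupp.single 0 m)) := by
  rw [substFun_def2, Finsupp.sum_single_index]
  rw [Finsupp.single_zero, iter_zerop _ (opnd_zerop D _ _),
    iter_zerop _ (opnd_zerop D _ _)]

end SubstFunBasic

section SubstFunLin

variable (D : M →ₗ[ℂ] M) {k' : ℕ}

lemma substFun_addp1 (q : Fin 1 → MP k' ℂ) (c : Fin 1 → ℂ) (p p' : MP 1 M) :
    substFun D q c (p + p') = substFun D q c p + substFun D q c p' := by
  simp only [substFun_def1]
  exact Finsupp.sum_add_index'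
    (fun α => by rw [Finsupp.single_zero, iter_zerop _ (opnd_zerop D _ _)])
    (fun α m m' => by rw [Finsupp.single_add, iter_addp _ (opnd_addp D _ _)])

lemma substFun_addp2 (q : Fin 2 → MP k' ℂ) (c : Fin 2 → ℂ) (p p' : MP 2 M) :
    substFun D q c (p + p') = substFun D q c p + substFun D q c p' := by
  simp only [substFun_def2]
  exact Finsupp.sum_add_index'
    (fun α => by rw [Finsupp.single_zero, iter_zerop _ (opnd_zerop D _ _),
      iter_zerop _ (opnd_zerop D _ _)])
    (fun α m m' => by rw [Finsupp.single_add, iter_addp _ (opnd_addp D _ _),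
      iter_addp _ (opnd_addp D _ _)])

lemma substFun_zerop (q : Fin k → MP k' ℂ) (c : Fin k → ℂ) :
    substFun D q c (0 : MP k M) = 0 := by
  unfold substFun
  exact Finsupp.sum_zero_index

lemma substFun_negp1 (q : Fin 1 → MP k' ℂ) (c : Fin 1 → ℂ) (p : MP 1 M) :
    substFun D q c (-p) = -(substFun D q c p) := by
  have h := substFun_addp1 D q c (-p) p
  rw [neg_add_cancel, substFun_zerop] at h
  exact eq_neg_of_add_eq_zero_left h.symm

lemma substFun_negp2 (q : Fin 2 → MP k' ℂ) (c : Fin 2 → ℂ) (p : MP 2 M) :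
    substFun D q c (-p) = -(substFun D q c p) := by
  have h := substFun_addp2 D q c (-p) p
  rw [neg_add_cancel, substFun_zerop] at h
  exact eq_neg_of_add_eq_zero_left h.symm

lemma substFun_subp1 (q : Fin 1 → MP k' ℂ) (c : Fin 1 → ℂ) (p p' : MP 1 M) :
    substFun D q c (p - p') = substFun D q c p - substFun D q c p' := by
  rw [sub_eq_add_neg, substFun_addp1, substFun_negp1, sub_eq_add_neg]

lemma substFun_subp2 (q : Fin 2 → MP k' ℂ) (c : Fin 2 → ℂ) (p p' : MP 2 M) :
    substFun D q c (p - p') = substFun D q c p - substFun D q c p' := by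
  rw [sub_eq_add_neg, substFun_addp2, substFun_negp2, sub_eq_add_neg]

lemma substFun_smulp1 (q : Fin 1 → MP k' ℂ) (c : Fin 1 → ℂ) (r : ℂ) (p : MP 1 M) :
    substFun D q c (r • p) = r • substFun D q c p := by
  simp only [substFun_def1]
  rw [Finsupp.sum_smul_index'
    (fun α => by rw [Finsupp.single_zero, iter_zerop _ (opnd_zerop D _ _)]),
    Finsupp.smul_sum]
  exact Finsupp.sum_congr fun α m => by
    rw [← Finsupp.smul_single, iter_smulp _ (opnd_smulp D _ _)]

lemma substFun_smulp2 (q : Fin 2 → MP k' ℂ) (c : Fin 2 → ℂ) (r : ℂ) (p : MP 2 M) :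
    substFun D q c (r • p) = r • substFun D q c p := by
  simp only [substFun_def2]
  rw [Finsupp.sum_smul_index'
    (fun α => by rw [Finsupp.single_zero, iter_zerop _ (opnd_zerop D _ _),
      iter_zerop _ (opnd_zerop D _ _)]),
    Finsupp.smul_sum]
  exact Finsupp.sum_congr fun α m => by
    rw [← Finsupp.smul_single, iter_smulp _ (opnd_smulp D _ _),
      iter_smulp _ (opnd_smulp D _ _)]

lemma substFun_single_zero1 (q : Fin 1 → MP k' ℂ) (c : Fin 1 → ℂ) (m : M) :
    substFun D q c (Finsupp.single 0 m) = Finsupp.single 0 m := by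
  rw [substFun_single1]
  simp

lemma substFun_single_zero2 (q : Fin 2 → MP k' ℂ) (c : Fin 2 → ℂ) (m : M) :
    substFun D q c (Finsupp.single 0 m) = Finsupp.single 0 m := by
  rw [substFun_single2]
  simp

lemma substFun_mapCoeff1 (q : Fin 1 → MP k' ℂ) (c : Fin 1 → ℂ) (p : MP 1 M) :
    substFun D q c (mapCoeff D p) = mapCoeff D (substFun D q c p) := by
  induction p using Finsupp.induction_linear with
  | zero => simp [mapCoeff_zerop, substFun_zerop]
  | add f g hf hg => rw [mapCoeff_addp, substFun_addp1, substFun_addp1, mapCoeff_addp, hf, hg]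
  | single α m =>
      rw [mapCoeff_single, substFun_single1, substFun_single1,
        ← mapCoeff_single D (0 : Fin k' →₀ ℕ) m,
        iter_comm _ _ (fun a => opnd_mapCoeff D _ _ a)]

lemma substFun_mapCoeff2 (q : Fin 2 → MP k' ℂ) (c : Fin 2 → ℂ) (p : MP 2 M) :
    substFun D q c (mapCoeff D p) = mapCoeff D (substFun D q c p) := by
  induction p using Finsupp.induction_linear with
  | zero => simp [mapCoeff_zerop, substFun_zerop]
  | add f g hf hg => rw [mapCoeff_addp, substFun_addp2, substFun_addp2, mapCoeff_addp, hf, hg]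
  | single α m =>
      rw [mapCoeff_single, substFun_single2, substFun_single2,
        ← mapCoeff_single D (0 : Fin k' →₀ ℕ) m,
        iter_comm _ _ (fun a => opnd_mapCoeff D _ _ a),
        iter_comm _ _ (fun a => opnd_mapCoeff D _ _ a)]

end SubstFunLin

section SubstFunMon

variable (D : M →ₗ[ℂ] M) {k' : ℕ}

lemma iter_iter_comm {X : Type*} [AddCommGroup X] [Module ℂ X] (f g : X → X)
    (h : ∀ a, f (g a) = g (f a)) (m n : ℕ) (a : X) :
    f^[m] (g^[n] a) = g^[n] (f^[m] a) :=
  iter_comm f (g^[n]) (fun a => (iter_comm g f (fun b => (h b).symm) n a).symm) m a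

lemma substFun_monMul1 (q : Fin 1 → MP k' ℂ) (c : Fin 1 → ℂ) (n : ℕ) (p : MP 1 M) :
    substFun D q c (monMul (Finsupp.single (0 : Fin 1) n) p) =
      (opnd D (q 0) (c 0))^[n] (substFun D q c p) := by
  induction p using Finsupp.induction_linear with
  | zero => rw [monMul_zerop, substFun_zerop, iter_zerop _ (opnd_zerop D _ _)]
  | add f g hf hg => rw [monMul_addp, substFun_addp1, substFun_addp1, hf, hg,
      iter_addp _ (opnd_addp D _ _)]
  | single α m =>
      rw [monMul_single, substFun_single1, substFun_single1]
      have : (Finsupp.single (0 : Fin 1) n + α) 0 = n + α 0 := by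
        simp [Finsupp.add_apply]
      rw [this, Function.iterate_add_apply]

lemma substFun_monMul2_0 (q : Fin 2 → MP k' ℂ) (c : Fin 2 → ℂ) (n : ℕ) (p : MP 2 M) :
    substFun D q c (monMul (Finsupp.single (0 : Fin 2) n) p) =
      (opnd D (q 0) (c 0))^[n] (substFun D q c p) := by
  induction p using Finsupp.induction_linear with
  | zero => rw [monMul_zerop, substFun_zerop, iter_zerop _ (opnd_zerop D _ _)]
  | add f g hf hg => rw [monMul_addp, substFun_addp2, substFun_addp2, hf, hg,
      iter_addp _ (opnd_addp D _ _)]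
  | single α m =>
      rw [monMul_single, substFun_single2, substFun_single2]
      have h0 : (Finsupp.single (0 : Fin 2) n + α) 0 = n + α 0 := by
        simp [Finsupp.add_apply]
      have h1 : (Finsupp.single (0 : Fin 2) n + α) 1 = α 1 := by
        simp [Finsupp.add_apply, Finsupp.single_eq_of_ne]
      rw [h0, h1, Function.iterate_add_apply]

lemma substFun_monMul2_1 (q : Fin 2 → MP k' ℂ) (c : Fin 2 → ℂ) (n : ℕ) (p : MP 2 M) :
    substFun D q c (monMul (Finsupp.single (1 : Fin 2) n) p) =
      (opnd D (q 1) (c 1))^[n] (substFun D q c p) := by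
  induction p using Finsupp.induction_linear with
  | zero => rw [monMul_zerop, substFun_zerop, iter_zerop _ (opnd_zerop D _ _)]
  | add f g hf hg => rw [monMul_addp, substFun_addp2, substFun_addp2, hf, hg,
      iter_addp _ (opnd_addp D _ _)]
  | single α m =>
      rw [monMul_single, substFun_single2, substFun_single2]
      have h0 : (Finsupp.single (1 : Fin 2) n + α) 0 = α 0 := by
        simp [Finsupp.add_apply, Finsupp.single_eq_of_ne]
      have h1 : (Finsupp.single (1 : Fin 2) n + α) 1 = n + α 1 := by
        simp [Finsupp.add_apply]
      rw [h0, h1, Function.iterate_add_apply,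
        iter_iter_comm _ _ (fun a => opnd_opnd D _ _ _ _ a) (α 0) n]

lemma monMul_iter_single (j : Fin k) (n : ℕ) (β : Fin k →₀ ℕ) (m : M) :
    (monMul (Finsupp.single j 1))^[n] (Finsupp.single β m) =
      Finsupp.single (Finsupp.single j n + β) m := by
  induction n with
  | zero => simp
  | succ n ih =>
      rw [Function.iterate_succ_apply', ih, monMul_single]
      congr 1
      rw [← add_assoc, ← Finsupp.single_add, add_comm n 1]

lemma fin1_eta (α : Fin 1 →₀ ℕ) : α = Finsupp.single 0 (α 0) := by
  apply Finsupp.ext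
  intro i
  have hi : i = 0 := Subsingleton.elim i 0
  subst hi
  simp

lemma renameV_eq_substFun (j : Fin 2) (p : MP 1 M) :
    renameV (fun _ : Fin 1 => j) p =
      substFun D (fun _ => Xv j) (fun _ => 0) p := by
  induction p using Finsupp.induction_linear with
  | zero => rw [substFun_zerop]; unfold renameV; exact Finsupp.mapDomain_zero
  | add f g hf hg =>
      rw [substFun_addp1, ← hf, ← hg]; unfold renameV; exact Finsupp.mapDomain_add
  | single α m =>
      unfold renameV
      rw [Finsupp.mapDomain_single, substFun_single1]
      have hop : opnd D (Xv j) (0 : ℂ) = monMul (Finsupp.single j 1) := by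
        funext x
        rw [opnd_def, zero_smul, add_zero, scaleP_Xv]
      rw [hop, monMul_iter_single, add_zero]
      congr 1
      rw [fin1_eta α, Finsupp.mapDomain_single]
      simp

end SubstFunMon

section SubstComp

variable (D : M →ₗ[ℂ] M) {k' : ℕ}

lemma iter_semiconj {X Y : Type*} (S : X → Y) (G : X → X) (G' : Y → Y)
    (h : ∀ a, S (G a) = G' (S a)) (n : ℕ) (a : X) :
    S (G^[n] a) = G'^[n] (S a) := by
  induction n with
  | zero => rfl
  | succ n ih => rw [Function.iterate_succ_apply', h, ih,
      ← Function.iterate_succ_apply' G' n (S a)]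

lemma subst_opnd_key1 (Q2 : Fin 1 → MP k' ℂ) (C2 : Fin 1 → ℂ) (r c1 : ℂ) (w : MP 1 M) :
    substFun D Q2 C2 (opnd D (r • Xv 0) c1 w) =
      opnd D (r • Q2 0) (r * C2 0 + c1) (substFun D Q2 C2 w) := by
  have hmon : substFun D Q2 C2 (monMul (Finsupp.single (0 : Fin 1) 1) w) =
      opnd D (Q2 0) (C2 0) (substFun D Q2 C2 w) := by
    rw [substFun_monMul1, Function.iterate_one]
  rw [opnd_def, substFun_addp1, substFun_smulp1, substFun_mapCoeff1,
    scaleP_smul_q, scaleP_Xv, substFun_smulp1, hmon, opnd_def, opnd_def]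
  rw [scaleP_smul_q]
  module

lemma subst_opnd_key2 (Q2 : Fin 2 → MP k' ℂ) (C2 : Fin 2 → ℂ) (r0 r1 c1 : ℂ) (w : MP 2 M) :
    substFun D Q2 C2 (opnd D (r0 • Xv 0 + r1 • Xv 1) c1 w) =
      opnd D (r0 • Q2 0 + r1 • Q2 1) (r0 * C2 0 + r1 * C2 1 + c1)
        (substFun D Q2 C2 w) := by
  have hmon0 : substFun D Q2 C2 (monMul (Finsupp.single (0 : Fin 2) 1) w) =
      opnd D (Q2 0) (C2 0) (substFun D Q2 C2 w) := by
    rw [substFun_monMul2_0, Function.iterate_one]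
  have hmon1 : substFun D Q2 C2 (monMul (Finsupp.single (1 : Fin 2) 1) w) =
      opnd D (Q2 1) (C2 1) (substFun D Q2 C2 w) := by
    rw [substFun_monMul2_1, Function.iterate_one]
  rw [opnd_def, scaleP_add_q, scaleP_smul_q, scaleP_smul_q, scaleP_Xv, scaleP_Xv,
    substFun_addp2, substFun_addp2, substFun_smulp2, substFun_smulp2, substFun_smulp2,
    substFun_mapCoeff2, hmon0, hmon1, opnd_def, opnd_def, opnd_def, scaleP_add_q,
    scaleP_smul_q, scaleP_smul_q]
  module

lemma subst_opnd_key12 (Q2 : Fin 2 → MP k' ℂ) (C2 : Fin 2 → ℂ) (r0 r1 c1 : ℂ)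
    (w : MP 2 M) :
    substFun D Q2 C2 (opnd D (r0 • Xv 0 + r1 • Xv 1) c1 w) =
      opnd D (r0 • Q2 0 + r1 • Q2 1) (r0 * C2 0 + r1 * C2 1 + c1)
        (substFun D Q2 C2 w) :=
  subst_opnd_key2 D Q2 C2 r0 r1 c1 w

lemma substFun_comp11 (Q2 : Fin 1 → MP k' ℂ) (C2 : Fin 1 → ℂ) (r c1 : ℂ)
    (Q1 : Fin 1 → MP 1 ℂ) (C1 : Fin 1 → ℂ) (hQ1 : Q1 0 = r • Xv 0) (hC1 : C1 0 = c1)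
    (Q3 : Fin 1 → MP k' ℂ) (C3 : Fin 1 → ℂ) (hQ3 : Q3 0 = r • Q2 0)
    (hC3 : C3 0 = r * C2 0 + c1) (p : MP 1 M) :
    substFun D Q2 C2 (substFun D Q1 C1 p) = substFun D Q3 C3 p := by
  induction p using Finsupp.induction_linear with
  | zero => rw [substFun_zerop, substFun_zerop, substFun_zerop]
  | add f g hf hg => rw [substFun_addp1, substFun_addp1, substFun_addp1, hf, hg]
  | single α m =>
      rw [substFun_single1, substFun_single1, hQ1, hC1, hQ3, hC3,
        iter_semiconj _ _ _ (fun a => subst_opnd_key1 D Q2 C2 r c1 a) (α 0),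
        substFun_single_zero1]

lemma substFun_comp12 (Q2 : Fin 2 → MP k' ℂ) (C2 : Fin 2 → ℂ) (r0 r1 c1 : ℂ)
    (Q1 : Fin 1 → MP 2 ℂ) (C1 : Fin 1 → ℂ) (hQ1 : Q1 0 = r0 • Xv 0 + r1 • Xv 1)
    (hC1 : C1 0 = c1)
    (Q3 : Fin 1 → MP k' ℂ) (C3 : Fin 1 → ℂ) (hQ3 : Q3 0 = r0 • Q2 0 + r1 • Q2 1)
    (hC3 : C3 0 = r0 * C2 0 + r1 * C2 1 + c1) (p : MP 1 M) :
    substFun D Q2 C2 (substFun D Q1 C1 p) = substFun D Q3 C3 p := by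
  induction p using Finsupp.induction_linear with
  | zero => rw [substFun_zerop, substFun_zerop, substFun_zerop]
  | add f g hf hg => rw [substFun_addp1, substFun_addp2, substFun_addp1, hf, hg]
  | single α m =>
      rw [substFun_single1, substFun_single1, hQ1, hC1, hQ3, hC3,
        iter_semiconj _ _ _ (fun a => subst_opnd_key2 D Q2 C2 r0 r1 c1 a) (α 0),
        substFun_single_zero2]

lemma substFun_comp22 (Q2 : Fin 2 → MP k' ℂ) (C2 : Fin 2 → ℂ)
    (a00 a01 a10 a11 c10 c11 : ℂ)
    (Q1 : Fin 2 → MP 2 ℂ) (C1 : Fin 2 → ℂ)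
    (hQ10 : Q1 0 = a00 • Xv 0 + a01 • Xv 1) (hQ11 : Q1 1 = a10 • Xv 0 + a11 • Xv 1)
    (hC10 : C1 0 = c10) (hC11 : C1 1 = c11)
    (Q3 : Fin 2 → MP k' ℂ) (C3 : Fin 2 → ℂ)
    (hQ30 : Q3 0 = a00 • Q2 0 + a01 • Q2 1) (hQ31 : Q3 1 = a10 • Q2 0 + a11 • Q2 1)
    (hC30 : C3 0 = a00 * C2 0 + a01 * C2 1 + c10)
    (hC31 : C3 1 = a10 * C2 0 + a11 * C2 1 + c11) (p : MP 2 M) :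
    substFun D Q2 C2 (substFun D Q1 C1 p) = substFun D Q3 C3 p := by
  induction p using Finsupp.induction_linear with
  | zero => rw [substFun_zerop, substFun_zerop, substFun_zerop]
  | add f g hf hg => rw [substFun_addp2, substFun_addp2, substFun_addp2, hf, hg]
  | single α m =>
      rw [substFun_single2, substFun_single2, hQ10, hQ11, hC10, hC11, hQ30, hQ31,
        hC30, hC31,
        iter_semiconj _ _ _ (fun a => subst_opnd_key2 D Q2 C2 a00 a01 c10 a) (α 0),
        iter_semiconj _ _ _ (fun a => subst_opnd_key2 D Q2 C2 a10 a11 c11 a) (α 1),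
        substFun_single_zero2]

end SubstComp

section Sub1Lemmas

variable (D : M →ₗ[ℂ] M)

lemma sub1_def (p : MP 1 M) :
    sub1 D p = substFun D (fun _ => -(Xv 0)) (fun _ => -1) p := rfl

lemma substFun_id1 (q : Fin 1 → MP 1 ℂ) (c : Fin 1 → ℂ) (hq : q 0 = Xv 0)
    (hc : c 0 = 0) (p : MP 1 M) : substFun D q c p = p := by
  induction p using Finsupp.induction_linear with
  | zero => rw [substFun_zerop]
  | add f g hf hg => rw [substFun_addp1, hf, hg]
  | single α m =>
      rw [substFun_single1, hq, hc]
      have hop : opnd D (Xv 0) (0 : ℂ) = monMul (Finsupp.single (0 : Fin 1) 1) := by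
        funext x
        rw [opnd_def, zero_smul, add_zero, scaleP_Xv]
      rw [hop, monMul_iter_single, add_zero, ← fin1_eta]

lemma sub1_sub1 (p : MP 1 M) : sub1 D (sub1 D p) = p := by
  rw [sub1_def, sub1_def]
  have h1 : substFun D (fun _ => -(Xv 0)) (fun _ => (-1 : ℂ))
      (substFun D (fun _ => -(Xv 0)) (fun _ => (-1 : ℂ)) p) =
      substFun D (fun _ : Fin 1 => (Xv 0 : MP 1 ℂ)) (fun _ => (0 : ℂ)) p :=
    substFun_comp11 D (fun _ => -(Xv 0)) (fun _ => (-1 : ℂ)) (-1) (-1)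
      (fun _ => -(Xv 0)) (fun _ => (-1 : ℂ)) ((neg_one_smul ℂ _).symm) rfl
      (fun _ => Xv 0) (fun _ => (0 : ℂ))
      (by rw [smul_neg, neg_one_smul, neg_neg]) (by norm_num) p
  rw [h1]
  exact substFun_id1 D (fun _ => Xv 0) (fun _ => (0 : ℂ)) rfl rfl p

lemma sub1_addp (p q : MP 1 M) : sub1 D (p + q) = sub1 D p + sub1 D q :=
  substFun_addp1 D _ _ p q

lemma sub1_zerop : sub1 D (0 : MP 1 M) = 0 := substFun_zerop D _ _

lemma sub1_negp (p : MP 1 M) : sub1 D (-p) = -(sub1 D p) := substFun_negp1 D _ _ p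

lemma sub1_subp (p q : MP 1 M) : sub1 D (p - q) = sub1 D p - sub1 D q :=
  substFun_subp1 D _ _ p q

lemma sub1_smulp (r : ℂ) (p : MP 1 M) : sub1 D (r • p) = r • sub1 D p :=
  substFun_smulp1 D _ _ r p

lemma sub1_monMul_lam1 (p : MP 1 M) :
    sub1 D (monMul lam1 p) = -(monMul lam1 (sub1 D p)) - mapCoeff D (sub1 D p) := by
  have : (lam1 : Fin 1 →₀ ℕ) = Finsupp.single (0 : Fin 1) 1 := rfl
  rw [this, sub1_def, substFun_monMul1, Function.iterate_one, opnd_def, scaleP_neg_q,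
    scaleP_Xv, ← sub1_def]
  module

lemma sub1_mapCoeff (p : MP 1 M) : sub1 D (mapCoeff D p) = mapCoeff D (sub1 D p) :=
  substFun_mapCoeff1 D _ _ p

end Sub1Lemmas

section OpRL

variable {A : Type*} [AddCommGroup A] [Module ℂ A]
variable (D : A →ₗ[ℂ] A)

lemma opE_def (F : A → A → MP 1 A) (q : MP 2 ℂ) (c : ℂ) (a b : A) :
    opE D F q c a b = substFun D (fun _ => q) (fun _ => c) (F a b) := rfl

lemma addhyp_zero {F : A → A → MP 1 A}
    (hadd : ∀ a b c : A, F a (b + c) = F a b + F a c) (a : A) : F a 0 = 0 := by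
  have h := hadd a 0 0
  rw [add_zero] at h
  exact add_eq_right.mp h.symm

lemma addhyp_zero_l {F : A → A → MP 1 A}
    (hadd : ∀ a b c : A, F (a + b) c = F a c + F b c) (b : A) : F 0 b = 0 := by
  have h := hadd 0 0 b
  rw [add_zero] at h
  exact add_eq_right.mp h.symm

variable (F : A → A → MP 1 A) (q : MP 2 ℂ) (c : ℂ)

section OpRLemmas

lemma opR_zerop (a : A) : opR D F q c a (0 : MP 2 A) = 0 := by
  unfold opR
  exact Finsupp.sum_zero_index

variable (hadd : ∀ a b c : A, F a (b + c) = F a b + F a c)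
variable (hsmul : ∀ (r : ℂ) (a b : A), F a (r • b) = r • F a b)

include hadd

lemma opE_zero_b (a : A) : opE D F q c a 0 = 0 := by
  rw [opE_def, addhyp_zero hadd, substFun_zerop]

lemma opR_single (a : A) (β : Fin 2 →₀ ℕ) (x : A) :
    opR D F q c a (Finsupp.single β x) = monMul β (opE D F q c a x) := by
  unfold opR
  rw [Finsupp.sum_single_index]
  rw [opE_zero_b D F q c hadd, monMul_zerop]

lemma opR_addp (a : A) (p p' : MP 2 A) :
    opR D F q c a (p + p') = opR D F q c a p + opR D F q c a p' := by
  unfold opR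
  exact Finsupp.sum_add_index'
    (fun β => by rw [opE_zero_b D F q c hadd, monMul_zerop])
    (fun β x y => by rw [opE_def, hadd, substFun_addp1, monMul_addp, opE_def, opE_def])

lemma opR_negp (a : A) (p : MP 2 A) : opR D F q c a (-p) = -(opR D F q c a p) := by
  have h := opR_addp D F q c hadd a (-p) p
  rw [neg_add_cancel, opR_zerop] at h
  exact eq_neg_of_add_eq_zero_left h.symm

lemma opR_subp (a : A) (p p' : MP 2 A) :
    opR D F q c a (p - p') = opR D F q c a p - opR D F q c a p' := by
  rw [sub_eq_add_neg, opR_addp D F q c hadd, opR_negp D F q c hadd, sub_eq_add_neg]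

lemma opR_monMul (a : A) (γ : Fin 2 →₀ ℕ) (p : MP 2 A) :
    opR D F q c a (monMul γ p) = monMul γ (opR D F q c a p) := by
  induction p using Finsupp.induction_linear with
  | zero => simp [monMul_zerop, opR_zerop]
  | add f g hf hg => rw [monMul_addp, opR_addp D F q c hadd, opR_addp D F q c hadd,
      hf, hg, monMul_addp]
  | single β x => rw [monMul_single, opR_single D F q c hadd,
      opR_single D F q c hadd, monMul_monMul]

include hsmul

lemma opR_smulp (a : A) (r : ℂ) (p : MP 2 A) :
    opR D F q c a (r • p) = r • opR D F q c a p := by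
  unfold opR
  rw [Finsupp.sum_smul_index'
    (fun β => by rw [opE_zero_b D F q c hadd, monMul_zerop]), Finsupp.smul_sum]
  exact Finsupp.sum_congr fun β x => by
    rw [opE_def, hsmul, substFun_smulp1, monMul_smulp, opE_def]

lemma opR_scaleP (a : A) (Q : MP 2 ℂ) (p : MP 2 A) :
    opR D F q c a (scaleP Q p) = scaleP Q (opR D F q c a p) := by
  unfold scaleP
  rw [fsum_push (opR D F q c a) (opR_addp D F q c hadd a) Q]
  exact Finsupp.sum_congr fun β r => by
    rw [opR_smulp D F q c hadd hsmul, opR_monMul D F q c hadd]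

variable (hsr : ∀ a b : A, F a (D b) = monMul lam1 (F a b) + mapCoeff D (F a b))

include hsr

lemma opE_Db (a x : A) :
    opE D F q c a (D x) = scaleP q (opE D F q c a x) + (c + 1) • mapCoeff D (opE D F q c a x) := by
  have hl : (lam1 : Fin 1 →₀ ℕ) = Finsupp.single (0 : Fin 1) 1 := rfl
  rw [opE_def, hsr, substFun_addp1, hl, substFun_monMul1, Function.iterate_one,
    substFun_mapCoeff1, opnd_def, ← opE_def]
  module

lemma opR_mapCoeff (a : A) (p : MP 2 A) :
    opR D F q c a (mapCoeff D p) =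
      scaleP q (opR D F q c a p) + (c + 1) • mapCoeff D (opR D F q c a p) := by
  induction p using Finsupp.induction_linear with
  | zero => simp [mapCoeff_zerop, opR_zerop, scaleP_zerop]
  | add f g hf hg =>
      rw [mapCoeff_addp, opR_addp D F q c hadd, opR_addp D F q c hadd, hf, hg,
        scaleP_addp, mapCoeff_addp, smul_add]
      abel
  | single β x =>
      rw [mapCoeff_single, opR_single D F q c hadd, opR_single D F q c hadd,
        opE_Db D F q c hadd hsmul hsr, monMul_addp, monMul_smulp, ← scaleP_monMul,
        ← mapCoeff_monMul]

lemma opR_opnd (a : A) (Q : MP 2 ℂ) (C : ℂ) (p : MP 2 A) :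
    opR D F q c a (opnd D Q C p) =
      opnd D (Q + C • q) (C * (c + 1)) (opR D F q c a p) := by
  rw [opnd_def, opR_addp D F q c hadd, opR_scaleP D F q c hadd hsmul,
    opR_smulp D F q c hadd hsmul, opR_mapCoeff D F q c hadd hsmul hsr, opnd_def,
    scaleP_add_q, scaleP_smul_q]
  module

lemma opR_subst (a : A) (Q : MP 2 ℂ) (C : ℂ) (p : MP 1 A)
    (QR : Fin 2 → MP 2 ℂ) (CR : Fin 2 → ℂ)
    (hQR0 : QR 0 = Q + C • q) (hQR1 : QR 1 = q)
    (hCR0 : CR 0 = C * (c + 1)) (hCR1 : CR 1 = c) :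
    opR D F q c a (substFun D (fun _ => Q) (fun _ => C) p) =
      substFun D QR CR (opR D F (Xv 1) 0 a (renameV (fun _ => (0 : Fin 2)) p)) := by
  induction p using Finsupp.induction_linear with
  | zero =>
      rw [substFun_zerop, opR_zerop]
      have : renameV (fun _ => (0 : Fin 2)) (0 : MP 1 A) = 0 := Finsupp.mapDomain_zero
      rw [this, opR_zerop, substFun_zerop]
  | add f g hf hg =>
      have : renameV (fun _ => (0 : Fin 2)) (f + g) =
          renameV (fun _ => (0 : Fin 2)) f + renameV (fun _ => (0 : Fin 2)) g :=
        Finsupp.mapDomain_add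
      rw [substFun_addp1, opR_addp D F q c hadd, hf, hg, this,
        opR_addp D F (Xv 1) 0 hadd, substFun_addp2]
  | single α m =>
      have hren : renameV (fun _ => (0 : Fin 2)) (Finsupp.single α m) =
          Finsupp.single (Finsupp.single (0 : Fin 2) (α 0)) m := by
        unfold renameV
        rw [Finsupp.mapDomain_single]
        congr 1
        rw [fin1_eta α, Finsupp.mapDomain_single]
        simp
      rw [substFun_single1, hren, opR_single D F (Xv 1) 0 hadd, substFun_monMul2_0,
        iter_semiconj (opR D F q c a) _ _
          (fun w => opR_opnd D F q c hadd hsmul hsr a Q C w) (α 0)]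
      congr 1
      · funext w
        rw [hQR0, hCR0]
      rw [opR_single D F q c hadd, monMul_zero_exp]
      have hbase : substFun D QR CR (opE D F (Xv 1) 0 a m) = opE D F q c a m := by
        rw [opE_def, opE_def]
        exact substFun_comp12 D QR CR 0 1 0 _ _ (by module) rfl
          (fun _ => q) (fun _ => c) (by rw [hQR1]; module) (by rw [hCR1]; ring) (F a m)
      rw [hbase]

end OpRLemmas

section OpLLemmas

lemma opL_zerop (b : A) : opL D F q c (0 : MP 2 A) b = 0 := by
  unfold opL
  exact Finsupp.sum_zero_index

variable (haddl : ∀ a b c : A, F (a + b) c = F a c + F b c)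
variable (hsmull : ∀ (r : ℂ) (a b : A), F (r • a) b = r • F a b)

include haddl

lemma opE_zero_a (b : A) : opE D F q c 0 b = 0 := by
  rw [opE_def, addhyp_zero_l haddl, substFun_zerop]

lemma opL_single (b : A) (β : Fin 2 →₀ ℕ) (x : A) :
    opL D F q c (Finsupp.single β x) b = monMul β (opE D F q c x b) := by
  unfold opL
  rw [Finsupp.sum_single_index]
  rw [opE_zero_a D F q c haddl, monMul_zerop]

lemma opL_addp (b : A) (p p' : MP 2 A) :
    opL D F q c (p + p') b = opL D F q c p b + opL D F q c p' b := by
  unfold opL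
  exact Finsupp.sum_add_index'
    (fun β => by rw [opE_zero_a D F q c haddl, monMul_zerop])
    (fun β x y => by rw [opE_def, haddl, substFun_addp1, monMul_addp, opE_def, opE_def])

lemma opL_negp (b : A) (p : MP 2 A) : opL D F q c (-p) b = -(opL D F q c p b) := by
  have h := opL_addp D F q c haddl b (-p) p
  rw [neg_add_cancel, opL_zerop] at h
  exact eq_neg_of_add_eq_zero_left h.symm

lemma opL_subp (b : A) (p p' : MP 2 A) :
    opL D F q c (p - p') b = opL D F q c p b - opL D F q c p' b := by
  rw [sub_eq_add_neg, opL_addp D F q c haddl, opL_negp D F q c haddl, sub_eq_add_neg]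

lemma opL_monMul (b : A) (γ : Fin 2 →₀ ℕ) (p : MP 2 A) :
    opL D F q c (monMul γ p) b = monMul γ (opL D F q c p b) := by
  induction p using Finsupp.induction_linear with
  | zero => simp [monMul_zerop, opL_zerop]
  | add f g hf hg => rw [monMul_addp, opL_addp D F q c haddl, opL_addp D F q c haddl,
      hf, hg, monMul_addp]
  | single β x => rw [monMul_single, opL_single D F q c haddl,
      opL_single D F q c haddl, monMul_monMul]

include hsmull

lemma opL_smulp (b : A) (r : ℂ) (p : MP 2 A) :
    opL D F q c (r • p) b = r • opL D F q c p b := by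
  unfold opL
  rw [Finsupp.sum_smul_index'
    (fun β => by rw [opE_zero_a D F q c haddl, monMul_zerop]), Finsupp.smul_sum]
  exact Finsupp.sum_congr fun β x => by
    rw [opE_def, hsmull, substFun_smulp1, monMul_smulp, opE_def]

lemma opL_scaleP (b : A) (Q : MP 2 ℂ) (p : MP 2 A) :
    opL D F q c (scaleP Q p) b = scaleP Q (opL D F q c p b) := by
  unfold scaleP
  rw [fsum_push (fun w => opL D F q c w b) (fun w w' => opL_addp D F q c haddl b w w') Q]
  exact Finsupp.sum_congr fun β r => by
    rw [opL_smulp D F q c haddl hsmull, opL_monMul D F q c haddl]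

variable (hsl : ∀ a b : A, F (D a) b = -(monMul lam1 (F a b)))

include hsl

lemma opE_Da (x b : A) :
    opE D F q c (D x) b =
      -(scaleP q (opE D F q c x b)) - c • mapCoeff D (opE D F q c x b) := by
  have hl : (lam1 : Fin 1 →₀ ℕ) = Finsupp.single (0 : Fin 1) 1 := rfl
  rw [opE_def, hsl, substFun_negp1, hl, substFun_monMul1, Function.iterate_one,
    opnd_def, ← opE_def]
  module

lemma opL_mapCoeff (b : A) (p : MP 2 A) :
    opL D F q c (mapCoeff D p) b =
      -(scaleP q (opL D F q c p b)) - c • mapCoeff D (opL D F q c p b) := by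
  induction p using Finsupp.induction_linear with
  | zero => simp [mapCoeff_zerop, opL_zerop, scaleP_zerop]
  | add f g hf hg =>
      rw [mapCoeff_addp, opL_addp D F q c haddl, opL_addp D F q c haddl, hf, hg,
        scaleP_addp, mapCoeff_addp, smul_add]
      abel
  | single β x =>
      rw [mapCoeff_single, opL_single D F q c haddl, opL_single D F q c haddl,
        opE_Da D F q c haddl hsmull hsl, monMul_subp, monMul_negp, monMul_smulp,
        ← scaleP_monMul, ← mapCoeff_monMul]

lemma opL_opnd (b : A) (Q : MP 2 ℂ) (C : ℂ) (p : MP 2 A) :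
    opL D F q c (opnd D Q C p) b =
      opnd D (Q - C • q) (-(C * c)) (opL D F q c p b) := by
  rw [opnd_def, opL_addp D F q c haddl, opL_scaleP D F q c haddl hsmull,
    opL_smulp D F q c haddl hsmull, opL_mapCoeff D F q c haddl hsmull hsl, opnd_def,
    scaleP_sub_q, scaleP_smul_q]
  module

lemma opL_subst (b : A) (Q : MP 2 ℂ) (C : ℂ) (p : MP 1 A)
    (QL : Fin 2 → MP 2 ℂ) (CL : Fin 2 → ℂ)
    (hQL0 : QL 0 = Q - C • q) (hQL1 : QL 1 = q)
    (hCL0 : CL 0 = -(C * c)) (hCL1 : CL 1 = c) :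
    opL D F q c (substFun D (fun _ => Q) (fun _ => C) p) b =
      substFun D QL CL (opL D F (Xv 1) 0 (renameV (fun _ => (0 : Fin 2)) p) b) := by
  induction p using Finsupp.induction_linear with
  | zero =>
      rw [substFun_zerop, opL_zerop]
      have : renameV (fun _ => (0 : Fin 2)) (0 : MP 1 A) = 0 := Finsupp.mapDomain_zero
      rw [this, opL_zerop, substFun_zerop]
  | add f g hf hg =>
      have : renameV (fun _ => (0 : Fin 2)) (f + g) =
          renameV (fun _ => (0 : Fin 2)) f + renameV (fun _ => (0 : Fin 2)) g :=
        Finsupp.mapDomain_add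
      rw [substFun_addp1, opL_addp D F q c haddl, hf, hg, this,
        opL_addp D F (Xv 1) 0 haddl, substFun_addp2]
  | single α m =>
      have hren : renameV (fun _ => (0 : Fin 2)) (Finsupp.single α m) =
          Finsupp.single (Finsupp.single (0 : Fin 2) (α 0)) m := by
        unfold renameV
        rw [Finsupp.mapDomain_single]
        congr 1
        rw [fin1_eta α, Finsupp.mapDomain_single]
        simp
      rw [substFun_single1, hren, opL_single D F (Xv 1) 0 haddl, substFun_monMul2_0,
        iter_semiconj (fun w => opL D F q c w b) _ _
          (fun w => opL_opnd D F q c haddl hsmull hsl b Q C w) (α 0)]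
      congr 1
      · funext w
        rw [hQL0, hCL0]
      rw [opL_single D F q c haddl, monMul_zero_exp]
      have hbase : substFun D QL CL (opE D F (Xv 1) 0 m b) = opE D F q c m b := by
        rw [opE_def, opE_def]
        exact substFun_comp12 D QL CL 0 1 0 _ _ (by module) rfl
          (fun _ => q) (fun _ => c) (by rw [hQL1]; module) (by rw [hCL1]; ring) (F m b)
      rw [hbase]

end OpLLemmas

section FlipSplit

lemma renameV_addp (hmap : Fin 1 → Fin 2) (p p' : MP 1 A) :
    renameV hmap (p + p') = renameV hmap p + renameV hmap p' :=
  Finsupp.mapDomain_add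

lemma renameV_zerop (hmap : Fin 1 → Fin 2) :
    renameV hmap (0 : MP 1 A) = 0 := Finsupp.mapDomain_zero

lemma renameV_negp (hmap : Fin 1 → Fin 2) (p : MP 1 A) :
    renameV hmap (-p) = -(renameV hmap p) := by
  have h := renameV_addp hmap (-p) p
  rw [neg_add_cancel, renameV_zerop] at h
  exact eq_neg_of_add_eq_zero_left h.symm

lemma renameV_subp (hmap : Fin 1 → Fin 2) (p p' : MP 1 A) :
    renameV hmap (p - p') = renameV hmap p - renameV hmap p' := by
  rw [sub_eq_add_neg, renameV_addp, renameV_negp, sub_eq_add_neg]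

lemma renameV_sub1 (D : A →ₗ[ℂ] A) (j : Fin 2) (p : MP 1 A) :
    renameV (fun _ => j) (sub1 D p) =
      substFun D (fun _ => -(Xv j)) (fun _ => (-1 : ℂ)) p := by
  rw [renameV_eq_substFun D j, sub1_def]
  exact substFun_comp11 D (fun _ => Xv j) (fun _ => (0 : ℂ)) (-1) (-1)
    (fun _ => -(Xv 0)) (fun _ => (-1 : ℂ)) ((neg_one_smul ℂ _).symm) rfl
    (fun _ => -(Xv j)) (fun _ => (-1 : ℂ)) ((neg_one_smul ℂ _).symm) (by ring) p

variable (D : A →ₗ[ℂ] A)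

lemma opE_flip (X : A → A → MP 1 A) (q : MP 2 ℂ) (c : ℂ) (q' : MP 2 ℂ) (c' : ℂ)
    (hq' : q' = (-1 : ℂ) • q) (hc' : c' = (-1) * c + (-1)) (a b : A) :
    opE D (fun x y => sub1 D (X y x)) q c a b = opE D X q' c' b a := by
  rw [opE_def, opE_def]
  show substFun D (fun _ => q) (fun _ => c) (sub1 D (X b a)) = _
  rw [sub1_def]
  exact substFun_comp11 D (fun _ => q) (fun _ => c) (-1) (-1)
    (fun _ => -(Xv 0)) (fun _ => (-1 : ℂ)) ((neg_one_smul ℂ _).symm) rfl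
    (fun _ => q') (fun _ => c') (by rw [hq']) (by rw [hc']) (X b a)

lemma opR_flip (X : A → A → MP 1 A) (q : MP 2 ℂ) (c : ℂ) (q' : MP 2 ℂ) (c' : ℂ)
    (hq' : q' = (-1 : ℂ) • q) (hc' : c' = (-1) * c + (-1)) (a : A) (p : MP 2 A) :
    opR D (fun x y => sub1 D (X y x)) q c a p = opL D X q' c' p a := by
  unfold opR opL
  exact Finsupp.sum_congr fun β _ => by
    rw [opE_flip D X q c q' c' hq' hc' a]

lemma opL_flip (X : A → A → MP 1 A) (q : MP 2 ℂ) (c : ℂ) (q' : MP 2 ℂ) (c' : ℂ)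
    (hq' : q' = (-1 : ℂ) • q) (hc' : c' = (-1) * c + (-1)) (b : A) (p : MP 2 A) :
    opL D (fun x y => sub1 D (X y x)) q c p b = opR D X q' c' b p := by
  unfold opR opL
  exact Finsupp.sum_congr fun β _ => by
    rw [opE_flip D X q c q' c' hq' hc']

lemma opR_Fsub (G H : A → A → MP 1 A) (q : MP 2 ℂ) (c : ℂ) (a : A) (p : MP 2 A) :
    opR D (fun x y => G x y - H x y) q c a p =
      opR D G q c a p - opR D H q c a p := by
  unfold opR
  rw [← Finsupp.sum_sub]
  exact Finsupp.sum_congr fun β _ => by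
    show monMul β (substFun D (fun _ => q) (fun _ => c) (G a _ - H a _)) = _
    rw [substFun_subp1, monMul_subp]
    rfl

lemma opL_Fsub (G H : A → A → MP 1 A) (q : MP 2 ℂ) (c : ℂ) (b : A) (p : MP 2 A) :
    opL D (fun x y => G x y - H x y) q c p b =
      opL D G q c p b - opL D H q c p b := by
  unfold opL
  rw [← Finsupp.sum_sub]
  exact Finsupp.sum_congr fun β _ => by
    show monMul β (substFun D (fun _ => q) (fun _ => c) (G _ b - H _ b)) = _
    rw [substFun_subp1, monMul_subp]
    rfl

end FlipSplit

end OpRL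

section CompWrap

variable {A : Type*} [AddCommGroup A] [Module ℂ A] (D : A →ₗ[ℂ] A)

lemma substFun_congr2 (Q Q' : Fin 2 → MP 2 ℂ) (C C' : Fin 2 → ℂ)
    (hq0 : Q 0 = Q' 0) (hq1 : Q 1 = Q' 1) (hc0 : C 0 = C' 0) (hc1 : C 1 = C' 1)
    (p : MP 2 A) : substFun D Q C p = substFun D Q' C' p := by
  induction p using Finsupp.induction_linear with
  | zero => rw [substFun_zerop, substFun_zerop]
  | add f g hf hg => rw [substFun_addp2, substFun_addp2, hf, hg]
  | single α m => rw [substFun_single2, substFun_single2, hq0, hq1, hc0, hc1]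

lemma comp_swap (S0 S1 : MP 2 ℂ) (d0 d1 : ℂ) (R0 R1 : MP 2 ℂ) (e0 e1 : ℂ)
    (h0 : R0 = S1) (h1 : R1 = S0) (he0 : e0 = d1) (he1 : e1 = d0) (p : MP 2 A) :
    substFun D ![S0, S1] ![d0, d1] (substFun D ![Xv 1, Xv 0] ![0, 0] p) =
      substFun D ![R0, R1] ![e0, e1] p :=
  substFun_comp22 D ![S0, S1] ![d0, d1] 0 1 1 0 0 0 ![Xv 1, Xv 0] ![0, 0]
    (by simp) (by simp) (by simp) (by simp) ![R0, R1] ![e0, e1]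
    (by simp [h0]) (by simp [h1]) (by simp [he0]) (by simp [he1]) p

lemma comp_aL (S0 S1 : MP 2 ℂ) (d0 d1 : ℂ) (R0 R1 : MP 2 ℂ) (e0 e1 : ℂ)
    (h0 : R0 = S0) (h1 : R1 = S0 + S1) (he0 : e0 = d0) (he1 : e1 = d0 + d1)
    (p : MP 2 A) :
    substFun D ![S0, S1] ![d0, d1] (substFun D ![Xv 0, Xv 0 + Xv 1] ![0, 0] p) =
      substFun D ![R0, R1] ![e0, e1] p :=
  substFun_comp22 D ![S0, S1] ![d0, d1] 1 0 1 1 0 0 ![Xv 0, Xv 0 + Xv 1] ![0, 0]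
    (by simp) (by simp) (by simp) (by simp) ![R0, R1] ![e0, e1]
    (by simp [h0]) (by simp [h1]) (by simp [he0]) (by simp [he1]) p

end CompWrap

end S16Aux

/-- A conformal NS-algebra `(A, ≻_λ, ≺_λ, ⋎_λ)` gives an NS-Lie
conformal algebra with `x∘_λ y = x≻_λ y - y≺_{-λ-∂}x` and
`x∨_λ y = x⋎_λ y - y⋎_{-λ-∂}x`. -/
theorem statement16 {A : Type*} [AddCommGroup A] [Module ℂ A]
    (D : A →ₗ[ℂ] A) (su pr cu : A → A → MP 1 A)
    (h : IsConfNS D su pr cu) :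
    IsNSLie D (fun x y => su x y - sub1 D (pr y x))
      (fun x y => cu x y - sub1 D (cu y x)) := by
  constructor
  case o_add_left =>
    intro a b c
    show su (a + b) c - sub1 D (pr c (a + b)) =
      (su a c - sub1 D (pr c a)) + (su b c - sub1 D (pr c b))
    rw [h.su_add_left, h.pr_add_right, sub1_addp]
    abel
  case o_smul_left =>
    intro r a b
    show su (r • a) b - sub1 D (pr b (r • a)) = r • (su a b - sub1 D (pr b a))
    rw [h.su_smul_left, h.pr_smul_right, sub1_smulp, smul_sub]
  case o_add_right =>
    intro a b c
    show su a (b + c) - sub1 D (pr (b + c) a) =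
      (su a b - sub1 D (pr b a)) + (su a c - sub1 D (pr c a))
    rw [h.su_add_right, h.pr_add_left, sub1_addp]
    abel
  case o_smul_right =>
    intro r a b
    show su a (r • b) - sub1 D (pr (r • b) a) = r • (su a b - sub1 D (pr b a))
    rw [h.su_smul_right, h.pr_smul_left, sub1_smulp, smul_sub]
  case o_sesq_left =>
    intro a b
    show su (D a) b - sub1 D (pr b (D a)) = -(monMul lam1 (su a b - sub1 D (pr b a)))
    rw [h.su_sesq_left, h.pr_sesq_right, sub1_addp, sub1_monMul_lam1, sub1_mapCoeff,
      monMul_subp]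
    abel
  case o_sesq_right =>
    intro a b
    show su a (D b) - sub1 D (pr (D b) a) =
      monMul lam1 (su a b - sub1 D (pr b a)) + mapCoeff D (su a b - sub1 D (pr b a))
    rw [h.su_sesq_right, h.pr_sesq_left, sub1_negp, sub1_monMul_lam1, monMul_subp,
      mapCoeff_subp]
    abel
  case v_add_left =>
    intro a b c
    show cu (a + b) c - sub1 D (cu c (a + b)) =
      (cu a c - sub1 D (cu c a)) + (cu b c - sub1 D (cu c b))
    rw [h.cu_add_left, h.cu_add_right, sub1_addp]
    abel
  case v_smul_left =>
    intro r a b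
    show cu (r • a) b - sub1 D (cu b (r • a)) = r • (cu a b - sub1 D (cu b a))
    rw [h.cu_smul_left, h.cu_smul_right, sub1_smulp, smul_sub]
  case v_add_right =>
    intro a b c
    show cu a (b + c) - sub1 D (cu (b + c) a) =
      (cu a b - sub1 D (cu b a)) + (cu a c - sub1 D (cu c a))
    rw [h.cu_add_right, h.cu_add_left, sub1_addp]
    abel
  case v_smul_right =>
    intro r a b
    show cu a (r • b) - sub1 D (cu (r • b) a) = r • (cu a b - sub1 D (cu b a))
    rw [h.cu_smul_right, h.cu_smul_left, sub1_smulp, smul_sub]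
  case v_sesq_left =>
    intro a b
    show cu (D a) b - sub1 D (cu b (D a)) = -(monMul lam1 (cu a b - sub1 D (cu b a)))
    rw [h.cu_sesq_left, h.cu_sesq_right, sub1_addp, sub1_monMul_lam1, sub1_mapCoeff,
      monMul_subp]
    abel
  case v_sesq_right =>
    intro a b
    show cu a (D b) - sub1 D (cu (D b) a) =
      monMul lam1 (cu a b - sub1 D (cu b a)) + mapCoeff D (cu a b - sub1 D (cu b a))
    rw [h.cu_sesq_right, h.cu_sesq_left, sub1_negp, sub1_monMul_lam1, monMul_subp,
      mapCoeff_subp]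
    abel
  case v_skew =>
    intro a b
    show cu a b - sub1 D (cu b a) = -(sub1 D (cu b a - sub1 D (cu a b)))
    rw [sub1_subp, sub1_sub1]
    abel
  case ns1 =>
    intro a b c
    have cx1 : ∀ x y z : A, substFun D (![Xv 1, Xv 0] : Fin 2 → MP 2 ℂ) (![0, 0] : Fin 2 → ℂ) (opR D su (Xv 1) 0 x (renameV (fun _ => (0 : Fin 2)) (su y z))) = substFun D (![Xv 0, Xv 0 + Xv 1] : Fin 2 → MP 2 ℂ) (![0, 0] : Fin 2 → ℂ) (opL D su (Xv 1) 0 (renameV (fun _ => (0 : Fin 2)) (su x y)) z) + substFun D (![Xv 0, Xv 0 + Xv 1] : Fin 2 → MP 2 ℂ) (![0, 0] : Fin 2 → ℂ) (opL D su (Xv 1) 0 (renameV (fun _ => (0 : Fin 2)) (pr x y)) z) + substFun D (![Xv 0, Xv 0 + Xv 1] : Fin 2 → MP 2 ℂ) (![0, 0] : Fin 2 → ℂ) (opL D su (Xv 1) 0 (renameV (fun _ => (0 : Fin 2)) (cu x y)) z) := by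
      intro x y z
      have t := h.ax1 x y z
      simp only [renameV_addp] at t
      simp only [renameV_eq_substFun D] at t
      rw [opL_addp D su (Xv 0 + Xv 1) 0 h.su_add_left, opL_addp D su (Xv 0 + Xv 1) 0 h.su_add_left] at t
      rw [opR_subst D su (Xv 0) (0) h.su_add_right h.su_smul_right h.su_sesq_right x (Xv 1) (0) (su y z) (![Xv 1, Xv 0] : Fin 2 → MP 2 ℂ) (![0, 0] : Fin 2 → ℂ) (by simp only [Matrix.cons_val_zero, Matrix.cons_val_one, Matrix.head_cons]; try module) (by simp only [Matrix.cons_val_zero, Matrix.cons_val_one, Matrix.head_cons]; try module) (by simp only [Matrix.cons_val_zero, Matrix.cons_val_one, Matrix.head_cons]; try ring) (by simp only [Matrix.cons_val_zero, Matrix.cons_val_one, Matrix.head_cons]; try ring), opL_subst D su (Xv 0 + Xv 1) (0) h.su_add_left h.su_smul_left h.su_sesq_left z (Xv 0) (0) (su x y) (![Xv 0, Xv 0 + Xv 1] : Fin 2 → MP 2 ℂ) (![0, 0] : Fin 2 → ℂ) (by simp only [Matrix.cons_val_zero, Matrix.cons_val_one, Matrix.head_cons]; try module) (by simp only [Matrix.cons_val_zero,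 Matrix.cons_val_one, Matrix.head_cons]; try module) (by simp only [Matrix.cons_val_zero, Matrix.cons_val_one, Matrix.head_cons]; try ring) (by simp only [Matrix.cons_val_zero, Matrix.cons_val_one, Matrix.head_cons]; try ring), opL_subst D su (Xv 0 + Xv 1) (0) h.su_add_left h.su_smul_left h.su_sesq_left z (Xv 0) (0) (pr x y) (![Xv 0, Xv 0 + Xv 1] : Fin 2 → MP 2 ℂ) (![0, 0] : Fin 2 → ℂ) (by simp only [Matrix.cons_val_zero, Matrix.cons_val_one, Matrix.head_cons]; try module) (by simp only [Matrix.cons_val_zero, Matrix.cons_val_one, Matrix.head_cons]; try module) (by simp only [Matrix.cons_val_zero, Matrix.cons_val_one, Matrix.head_cons]; try ring) (by simp only [Matrix.cons_val_zero, Matrix.cons_val_one, Matrix.head_cons]; try ring), opL_subst D su (Xv 0 + Xv 1) (0) h.su_add_left h.su_smul_left h.su_sesq_left z (Xv 0) (0) (cu x y) (![Xv 0, Xv 0 + Xv 1] : Fin 2 → MP 2 ℂ) (![0, 0] : Fin 2 → ℂ) (by simp only [Matrix.cons_val_zero, Matrix.cons_val_one, Matrix.head_cons]; try module) (by simp only [Matrix.cons_val_zero,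 Matrix.cons_val_one, Matrix.head_cons]; try module) (by simp only [Matrix.cons_val_zero, Matrix.cons_val_one, Matrix.head_cons]; try ring) (by simp only [Matrix.cons_val_zero, Matrix.cons_val_one, Matrix.head_cons]; try ring)] at t
      exact t
    have cx2 : ∀ x y z : A, substFun D (![Xv 1, Xv 0] : Fin 2 → MP 2 ℂ) (![0, 0] : Fin 2 → ℂ) (opR D pr (Xv 1) 0 x (renameV (fun _ => (0 : Fin 2)) (su y z))) + substFun D (![Xv 1, Xv 0] : Fin 2 → MP 2 ℂ) (![0, 0] : Fin 2 → ℂ) (opR D pr (Xv 1) 0 x (renameV (fun _ => (0 : Fin 2)) (pr y z))) + substFun D (![Xv 1, Xv 0] : Fin 2 → MP 2 ℂ) (![0, 0] : Fin 2 → ℂ) (opR D pr (Xv 1) 0 x (renameV (fun _ => (0 : Fin 2)) (cu y z))) = substFun D (![Xv 0, Xv 0 + Xv 1] : Fin 2 → MP 2 ℂ) (![0, 0] : Fin 2 → ℂ) (opL D pr (Xv 1) 0 (renameV (fun _ => (0 : Fin 2)) (pr x y)) z) := by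
      intro x y z
      have t := h.ax2 x y z
      simp only [renameV_addp] at t
      simp only [renameV_eq_substFun D] at t
      rw [opR_addp D pr (Xv 0) 0 h.pr_add_right, opR_addp D pr (Xv 0) 0 h.pr_add_right] at t
      rw [opR_subst D pr (Xv 0) (0) h.pr_add_right h.pr_smul_right h.pr_sesq_right x (Xv 1) (0) (su y z) (![Xv 1, Xv 0] : Fin 2 → MP 2 ℂ) (![0, 0] : Fin 2 → ℂ) (by simp only [Matrix.cons_val_zero, Matrix.cons_val_one, Matrix.head_cons]; try module) (by simp only [Matrix.cons_val_zero, Matrix.cons_val_one, Matrix.head_cons]; try module) (by simp only [Matrix.cons_val_zero, Matrix.cons_val_one, Matrix.head_cons]; try ring) (by simp only [Matrix.cons_val_zero, Matrix.cons_val_one, Matrix.head_cons]; try ring), opR_subst D pr (Xv 0) (0) h.pr_add_right h.pr_smul_right h.pr_sesq_right x (Xv 1) (0) (pr y z) (![Xv 1, Xv 0] : Fin 2 → MP 2 ℂ) (![0, 0] : Fin 2 → ℂ) (by simp only [Matrix.cons_val_zero, Matrix.cons_val_one, Matrix.head_cons]; try module) (by simp only [Matrix.cons_val_zero, Matrix.cons_val_one,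 Matrix.head_cons]; try module) (by simp only [Matrix.cons_val_zero, Matrix.cons_val_one, Matrix.head_cons]; try ring) (by simp only [Matrix.cons_val_zero, Matrix.cons_val_one, Matrix.head_cons]; try ring), opR_subst D pr (Xv 0) (0) h.pr_add_right h.pr_smul_right h.pr_sesq_right x (Xv 1) (0) (cu y z) (![Xv 1, Xv 0] : Fin 2 → MP 2 ℂ) (![0, 0] : Fin 2 → ℂ) (by simp only [Matrix.cons_val_zero, Matrix.cons_val_one, Matrix.head_cons]; try module) (by simp only [Matrix.cons_val_zero, Matrix.cons_val_one, Matrix.head_cons]; try module) (by simp only [Matrix.cons_val_zero, Matrix.cons_val_one, Matrix.head_cons]; try ring) (by simp only [Matrix.cons_val_zero, Matrix.cons_val_one, Matrix.head_cons]; try ring), opL_subst D pr (Xv 0 + Xv 1) (0) h.pr_add_left h.pr_smul_left h.pr_sesq_left z (Xv 0) (0) (pr x y) (![Xv 0, Xv 0 + Xv 1] : Fin 2 → MP 2 ℂ) (![0, 0] : Fin 2 → ℂ) (by simp only [Matrix.cons_val_zero, Matrix.cons_val_one, Matrix.head_cons]; try module) (by simp only [Matrix.cons_val_zero, Matrix.cons_val_one,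 Matrix.head_cons]; try module) (by simp only [Matrix.cons_val_zero, Matrix.cons_val_one, Matrix.head_cons]; try ring) (by simp only [Matrix.cons_val_zero, Matrix.cons_val_one, Matrix.head_cons]; try ring)] at t
      exact t
    have cx3 : ∀ x y z : A, substFun D (![Xv 1, Xv 0] : Fin 2 → MP 2 ℂ) (![0, 0] : Fin 2 → ℂ) (opR D su (Xv 1) 0 x (renameV (fun _ => (0 : Fin 2)) (pr y z))) = substFun D (![Xv 0, Xv 0 + Xv 1] : Fin 2 → MP 2 ℂ) (![0, 0] : Fin 2 → ℂ) (opL D pr (Xv 1) 0 (renameV (fun _ => (0 : Fin 2)) (su x y)) z) := by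
      intro x y z
      have t := h.ax3 x y z
      simp only [renameV_eq_substFun D] at t
      rw [opR_subst D su (Xv 0) (0) h.su_add_right h.su_smul_right h.su_sesq_right x (Xv 1) (0) (pr y z) (![Xv 1, Xv 0] : Fin 2 → MP 2 ℂ) (![0, 0] : Fin 2 → ℂ) (by simp only [Matrix.cons_val_zero, Matrix.cons_val_one, Matrix.head_cons]; try module) (by simp only [Matrix.cons_val_zero, Matrix.cons_val_one, Matrix.head_cons]; try module) (by simp only [Matrix.cons_val_zero, Matrix.cons_val_one, Matrix.head_cons]; try ring) (by simp only [Matrix.cons_val_zero, Matrix.cons_val_one, Matrix.head_cons]; try ring), opL_subst D pr (Xv 0 + Xv 1) (0) h.pr_add_left h.pr_smul_left h.pr_sesq_left z (Xv 0) (0) (su x y) (![Xv 0, Xv 0 + Xv 1] : Fin 2 → MP 2 ℂ) (![0, 0] : Fin 2 → ℂ) (by simp only [Matrix.cons_val_zero, Matrix.cons_val_one, Matrix.head_cons]; try module) (by simp only [Matrix.cons_val_zero, Matrix.cons_val_one, Matrix.head_cons]; try module) (by simp only [Matrix.cons_val_zero, Matrix.cons_val_one, Matrix.head_cons]; try ring)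 (by simp only [Matrix.cons_val_zero, Matrix.cons_val_one, Matrix.head_cons]; try ring)] at t
      exact t
    have e2 := congrArg (substFun D (![Xv 1, Xv 0] : Fin 2 → MP 2 ℂ) (![0, 0] : Fin 2 → ℂ)) (cx1 b a c)
    rw [substFun_addp2, substFun_addp2] at e2
    rw [comp_swap D (Xv 1) (Xv 0) (0) (0) (Xv 0) (Xv 1) (0) (0) (by module) (by module) (by ring) (by ring)] at e2
    simp only [comp_aL D (Xv 1) (Xv 0) (0) (0) (Xv 1) (Xv 0 + Xv 1) (0) (0) (by module) (by module) (by ring) (by ring)] at e2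
    have e3 := congrArg (substFun D (![Xv 0, -(Xv 0) - Xv 1] : Fin 2 → MP 2 ℂ) (![0, -1] : Fin 2 → ℂ)) (cx3 a c b)
    rw [comp_swap D (Xv 0) (-(Xv 0) - Xv 1) (0) (-1) (-(Xv 0) - Xv 1) (Xv 0) (-1) (0) (by module) (by module) (by ring) (by ring), comp_aL D (Xv 0) (-(Xv 0) - Xv 1) (0) (-1) (Xv 0) (-(Xv 1)) (0) (-1) (by module) (by module) (by ring) (by ring)] at e3
    have e4 := congrArg (substFun D (![Xv 1, -(Xv 0) - Xv 1] : Fin 2 → MP 2 ℂ) (![0, -1] : Fin 2 → ℂ)) (cx3 b c a)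
    rw [comp_swap D (Xv 1) (-(Xv 0) - Xv 1) (0) (-1) (-(Xv 0) - Xv 1) (Xv 1) (-1) (0) (by module) (by module) (by ring) (by ring), comp_aL D (Xv 1) (-(Xv 0) - Xv 1) (0) (-1) (Xv 1) (-(Xv 0)) (0) (-1) (by module) (by module) (by ring) (by ring)] at e4
    have e5 := congrArg (substFun D (![-(Xv 0) - Xv 1, Xv 0] : Fin 2 → MP 2 ℂ) (![-1, 0] : Fin 2 → ℂ)) (cx2 c a b)
    rw [substFun_addp2, substFun_addp2] at e5
    simp only [comp_swap D (-(Xv 0) - Xv 1) (Xv 0) (-1) (0) (Xv 0) (-(Xv 0) - Xv 1) (0) (-1) (by module) (by module) (by ring) (by ring)] at e5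
    rw [comp_aL D (-(Xv 0) - Xv 1) (Xv 0) (-1) (0) (-(Xv 0) - Xv 1) (-(Xv 1)) (-1) (-1) (by module) (by module) (by ring) (by ring)] at e5
    have e6 := congrArg (substFun D (![-(Xv 0) - Xv 1, Xv 1] : Fin 2 → MP 2 ℂ) (![-1, 0] : Fin 2 → ℂ)) (cx2 c b a)
    rw [substFun_addp2, substFun_addp2] at e6
    simp only [comp_swap D (-(Xv 0) - Xv 1) (Xv 1) (-1) (0) (Xv 1) (-(Xv 0) - Xv 1) (0) (-1) (by module) (by module) (by ring) (by ring)] at e6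
    rw [comp_aL D (-(Xv 0) - Xv 1) (Xv 1) (-1) (0) (-(Xv 0) - Xv 1) (-(Xv 0)) (-1) (-1) (by module) (by module) (by ring) (by ring)] at e6
    have Lsu := fun (q : MP 2 ℂ) (c0 : ℂ) => opL_subp D su q c0 h.su_add_left
    have Lpr := fun (q : MP 2 ℂ) (c0 : ℂ) => opL_subp D pr q c0 h.pr_add_left
    have Rsu := fun (q : MP 2 ℂ) (c0 : ℂ) => opR_subp D su q c0 h.su_add_right
    have Rpr := fun (q : MP 2 ℂ) (c0 : ℂ) => opR_subp D pr q c0 h.pr_add_right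
    simp only [renameV_subp]
    simp only [renameV_sub1 D]
    simp only [renameV_eq_substFun D]
    simp only [opL_Fsub D, opR_Fsub D]
    simp only [opL_flip D pr (Xv 0 + Xv 1) 0 (-(Xv 0) - Xv 1) (-1) (by module) (by ring), opR_flip D pr (Xv 0) 0 (-(Xv 0)) (-1) (by module) (by ring), opR_flip D pr (Xv 1) 0 (-(Xv 1)) (-1) (by module) (by ring)]
    simp only [Lsu, Lpr, Rsu, Rpr]
    rw [opL_subst D su (Xv 0 + Xv 1) (0) h.su_add_left h.su_smul_left h.su_sesq_left c (Xv 0) (0) (su a b) (![Xv 0, Xv 0 + Xv 1] : Fin 2 → MP 2 ℂ) (![0, 0] : Fin 2 → ℂ) (by simp only [Matrix.cons_val_zero, Matrix.cons_val_one, Matrix.head_cons]; try module) (by simp only [Matrix.cons_val_zero, Matrix.cons_val_one, Matrix.head_cons]; try module) (by simp only [Matrix.cons_val_zero, Matrix.cons_val_one, Matrix.head_cons]; try ring) (by simp only [Matrix.cons_val_zero, Matrix.cons_val_one, Matrix.head_cons]; try ring)]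
    rw [opL_subst D su (Xv 0 + Xv 1) (0) h.su_add_left h.su_smul_left h.su_sesq_left c (-(Xv 0)) (-1) (pr b a) (![Xv 1, Xv 0 + Xv 1] : Fin 2 → MP 2 ℂ) (![0, 0] : Fin 2 → ℂ) (by simp only [Matrix.cons_val_zero, Matrix.cons_val_one, Matrix.head_cons]; try module) (by simp only [Matrix.cons_val_zero, Matrix.cons_val_one, Matrix.head_cons]; try module) (by simp only [Matrix.cons_val_zero, Matrix.cons_val_one, Matrix.head_cons]; try ring) (by simp only [Matrix.cons_val_zero, Matrix.cons_val_one, Matrix.head_cons]; try ring)]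
    rw [opR_subst D pr (-(Xv 0) - Xv 1) (-1) h.pr_add_right h.pr_smul_right h.pr_sesq_right c (Xv 0) (0) (su a b) (![Xv 0, -(Xv 0) - Xv 1] : Fin 2 → MP 2 ℂ) (![0, -1] : Fin 2 → ℂ) (by simp only [Matrix.cons_val_zero, Matrix.cons_val_one, Matrix.head_cons]; try module) (by simp only [Matrix.cons_val_zero, Matrix.cons_val_one, Matrix.head_cons]; try module) (by simp only [Matrix.cons_val_zero, Matrix.cons_val_one, Matrix.head_cons]; try ring) (by simp only [Matrix.cons_val_zero, Matrix.cons_val_one, Matrix.head_cons]; try ring)]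
    rw [opR_subst D pr (-(Xv 0) - Xv 1) (-1) h.pr_add_right h.pr_smul_right h.pr_sesq_right c (-(Xv 0)) (-1) (pr b a) (![Xv 1, -(Xv 0) - Xv 1] : Fin 2 → MP 2 ℂ) (![0, -1] : Fin 2 → ℂ) (by simp only [Matrix.cons_val_zero, Matrix.cons_val_one, Matrix.head_cons]; try module) (by simp only [Matrix.cons_val_zero, Matrix.cons_val_one, Matrix.head_cons]; try module) (by simp only [Matrix.cons_val_zero, Matrix.cons_val_one, Matrix.head_cons]; try ring) (by simp only [Matrix.cons_val_zero, Matrix.cons_val_one, Matrix.head_cons]; try ring)]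
    rw [opR_subst D su (Xv 0) (0) h.su_add_right h.su_smul_right h.su_sesq_right a (Xv 1) (0) (su b c) (![Xv 1, Xv 0] : Fin 2 → MP 2 ℂ) (![0, 0] : Fin 2 → ℂ) (by simp only [Matrix.cons_val_zero, Matrix.cons_val_one, Matrix.head_cons]; try module) (by simp only [Matrix.cons_val_zero, Matrix.cons_val_one, Matrix.head_cons]; try module) (by simp only [Matrix.cons_val_zero, Matrix.cons_val_one, Matrix.head_cons]; try ring) (by simp only [Matrix.cons_val_zero, Matrix.cons_val_one, Matrix.head_cons]; try ring)]
    rw [opR_subst D su (Xv 0) (0) h.su_add_right h.su_smul_right h.su_sesq_right a (-(Xv 1)) (-1) (pr c b) (![-(Xv 0) - Xv 1, Xv 0] : Fin 2 → MP 2 ℂ) (![-1, 0] : Fin 2 → ℂ) (by simp only [Matrix.cons_val_zero, Matrix.cons_val_one, Matrix.head_cons]; try module) (by simp only [Matrix.cons_val_zero, Matrix.cons_val_one, Matrix.head_cons]; try module) (by simp only [Matrix.cons_val_zero, Matrix.cons_val_one, Matrix.head_cons]; try ring) (by simp only [Matrix.cons_val_zero, Matrix.cons_val_one, Matrix.head_cons];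 try ring)]
    rw [opL_subst D pr (-(Xv 0)) (-1) h.pr_add_left h.pr_smul_left h.pr_sesq_left a (Xv 1) (0) (su b c) (![Xv 1, -(Xv 0)] : Fin 2 → MP 2 ℂ) (![0, -1] : Fin 2 → ℂ) (by simp only [Matrix.cons_val_zero, Matrix.cons_val_one, Matrix.head_cons]; try module) (by simp only [Matrix.cons_val_zero, Matrix.cons_val_one, Matrix.head_cons]; try module) (by simp only [Matrix.cons_val_zero, Matrix.cons_val_one, Matrix.head_cons]; try ring) (by simp only [Matrix.cons_val_zero, Matrix.cons_val_one, Matrix.head_cons]; try ring)]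
    rw [opL_subst D pr (-(Xv 0)) (-1) h.pr_add_left h.pr_smul_left h.pr_sesq_left a (-(Xv 1)) (-1) (pr c b) (![-(Xv 0) - Xv 1, -(Xv 0)] : Fin 2 → MP 2 ℂ) (![-1, -1] : Fin 2 → ℂ) (by simp only [Matrix.cons_val_zero, Matrix.cons_val_one, Matrix.head_cons]; try module) (by simp only [Matrix.cons_val_zero, Matrix.cons_val_one, Matrix.head_cons]; try module) (by simp only [Matrix.cons_val_zero, Matrix.cons_val_one, Matrix.head_cons]; try ring) (by simp only [Matrix.cons_val_zero, Matrix.cons_val_one, Matrix.head_cons]; try ring)]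
    rw [opL_subst D su (Xv 0 + Xv 1) (0) h.su_add_left h.su_smul_left h.su_sesq_left c (Xv 1) (0) (su b a) (![Xv 1, Xv 0 + Xv 1] : Fin 2 → MP 2 ℂ) (![0, 0] : Fin 2 → ℂ) (by simp only [Matrix.cons_val_zero, Matrix.cons_val_one, Matrix.head_cons]; try module) (by simp only [Matrix.cons_val_zero, Matrix.cons_val_one, Matrix.head_cons]; try module) (by simp only [Matrix.cons_val_zero, Matrix.cons_val_one, Matrix.head_cons]; try ring) (by simp only [Matrix.cons_val_zero, Matrix.cons_val_one, Matrix.head_cons]; try ring)]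
    rw [opL_subst D su (Xv 0 + Xv 1) (0) h.su_add_left h.su_smul_left h.su_sesq_left c (-(Xv 1)) (-1) (pr a b) (![Xv 0, Xv 0 + Xv 1] : Fin 2 → MP 2 ℂ) (![0, 0] : Fin 2 → ℂ) (by simp only [Matrix.cons_val_zero, Matrix.cons_val_one, Matrix.head_cons]; try module) (by simp only [Matrix.cons_val_zero, Matrix.cons_val_one, Matrix.head_cons]; try module) (by simp only [Matrix.cons_val_zero, Matrix.cons_val_one, Matrix.head_cons]; try ring) (by simp only [Matrix.cons_val_zero, Matrix.cons_val_one, Matrix.head_cons]; try ring)]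
    rw [opR_subst D pr (-(Xv 0) - Xv 1) (-1) h.pr_add_right h.pr_smul_right h.pr_sesq_right c (Xv 1) (0) (su b a) (![Xv 1, -(Xv 0) - Xv 1] : Fin 2 → MP 2 ℂ) (![0, -1] : Fin 2 → ℂ) (by simp only [Matrix.cons_val_zero, Matrix.cons_val_one, Matrix.head_cons]; try module) (by simp only [Matrix.cons_val_zero, Matrix.cons_val_one, Matrix.head_cons]; try module) (by simp only [Matrix.cons_val_zero, Matrix.cons_val_one, Matrix.head_cons]; try ring) (by simp only [Matrix.cons_val_zero, Matrix.cons_val_one, Matrix.head_cons]; try ring)]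
    rw [opR_subst D pr (-(Xv 0) - Xv 1) (-1) h.pr_add_right h.pr_smul_right h.pr_sesq_right c (-(Xv 1)) (-1) (pr a b) (![Xv 0, -(Xv 0) - Xv 1] : Fin 2 → MP 2 ℂ) (![0, -1] : Fin 2 → ℂ) (by simp only [Matrix.cons_val_zero, Matrix.cons_val_one, Matrix.head_cons]; try module) (by simp only [Matrix.cons_val_zero, Matrix.cons_val_one, Matrix.head_cons]; try module) (by simp only [Matrix.cons_val_zero, Matrix.cons_val_one, Matrix.head_cons]; try ring) (by simp only [Matrix.cons_val_zero, Matrix.cons_val_one, Matrix.head_cons]; try ring)]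
    rw [opR_subst D su (Xv 1) (0) h.su_add_right h.su_smul_right h.su_sesq_right b (Xv 0) (0) (su a c) (![Xv 0, Xv 1] : Fin 2 → MP 2 ℂ) (![0, 0] : Fin 2 → ℂ) (by simp only [Matrix.cons_val_zero, Matrix.cons_val_one, Matrix.head_cons]; try module) (by simp only [Matrix.cons_val_zero, Matrix.cons_val_one, Matrix.head_cons]; try module) (by simp only [Matrix.cons_val_zero, Matrix.cons_val_one, Matrix.head_cons]; try ring) (by simp only [Matrix.cons_val_zero, Matrix.cons_val_one, Matrix.head_cons]; try ring)]
    rw [opR_subst D su (Xv 1) (0) h.su_add_right h.su_smul_right h.su_sesq_right b (-(Xv 0)) (-1) (pr c a) (![-(Xv 0) - Xv 1, Xv 1] : Fin 2 → MP 2 ℂ) (![-1, 0] : Fin 2 → ℂ) (by simp only [Matrix.cons_val_zero, Matrix.cons_val_one, Matrix.head_cons]; try module) (by simp only [Matrix.cons_val_zero, Matrix.cons_val_one, Matrix.head_cons]; try module) (by simp only [Matrix.cons_val_zero, Matrix.cons_val_one, Matrix.head_cons]; try ring) (by simp only [Matrix.cons_val_zero, Matrix.cons_val_one, Matrix.head_cons];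 try ring)]
    rw [opL_subst D pr (-(Xv 1)) (-1) h.pr_add_left h.pr_smul_left h.pr_sesq_left b (Xv 0) (0) (su a c) (![Xv 0, -(Xv 1)] : Fin 2 → MP 2 ℂ) (![0, -1] : Fin 2 → ℂ) (by simp only [Matrix.cons_val_zero, Matrix.cons_val_one, Matrix.head_cons]; try module) (by simp only [Matrix.cons_val_zero, Matrix.cons_val_one, Matrix.head_cons]; try module) (by simp only [Matrix.cons_val_zero, Matrix.cons_val_one, Matrix.head_cons]; try ring) (by simp only [Matrix.cons_val_zero, Matrix.cons_val_one, Matrix.head_cons]; try ring)]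
    rw [opL_subst D pr (-(Xv 1)) (-1) h.pr_add_left h.pr_smul_left h.pr_sesq_left b (-(Xv 0)) (-1) (pr c a) (![-(Xv 0) - Xv 1, -(Xv 1)] : Fin 2 → MP 2 ℂ) (![-1, -1] : Fin 2 → ℂ) (by simp only [Matrix.cons_val_zero, Matrix.cons_val_one, Matrix.head_cons]; try module) (by simp only [Matrix.cons_val_zero, Matrix.cons_val_one, Matrix.head_cons]; try module) (by simp only [Matrix.cons_val_zero, Matrix.cons_val_one, Matrix.head_cons]; try ring) (by simp only [Matrix.cons_val_zero, Matrix.cons_val_one, Matrix.head_cons]; try ring)]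
    rw [opL_subst D su (Xv 0 + Xv 1) (0) h.su_add_left h.su_smul_left h.su_sesq_left c (Xv 0) (0) (cu a b) (![Xv 0, Xv 0 + Xv 1] : Fin 2 → MP 2 ℂ) (![0, 0] : Fin 2 → ℂ) (by simp only [Matrix.cons_val_zero, Matrix.cons_val_one, Matrix.head_cons]; try module) (by simp only [Matrix.cons_val_zero, Matrix.cons_val_one, Matrix.head_cons]; try module) (by simp only [Matrix.cons_val_zero, Matrix.cons_val_one, Matrix.head_cons]; try ring) (by simp only [Matrix.cons_val_zero, Matrix.cons_val_one, Matrix.head_cons]; try ring)]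
    rw [opL_subst D su (Xv 0 + Xv 1) (0) h.su_add_left h.su_smul_left h.su_sesq_left c (-(Xv 0)) (-1) (cu b a) (![Xv 1, Xv 0 + Xv 1] : Fin 2 → MP 2 ℂ) (![0, 0] : Fin 2 → ℂ) (by simp only [Matrix.cons_val_zero, Matrix.cons_val_one, Matrix.head_cons]; try module) (by simp only [Matrix.cons_val_zero, Matrix.cons_val_one, Matrix.head_cons]; try module) (by simp only [Matrix.cons_val_zero, Matrix.cons_val_one, Matrix.head_cons]; try ring) (by simp only [Matrix.cons_val_zero, Matrix.cons_val_one, Matrix.head_cons]; try ring)]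
    rw [opR_subst D pr (-(Xv 0) - Xv 1) (-1) h.pr_add_right h.pr_smul_right h.pr_sesq_right c (Xv 0) (0) (cu a b) (![Xv 0, -(Xv 0) - Xv 1] : Fin 2 → MP 2 ℂ) (![0, -1] : Fin 2 → ℂ) (by simp only [Matrix.cons_val_zero, Matrix.cons_val_one, Matrix.head_cons]; try module) (by simp only [Matrix.cons_val_zero, Matrix.cons_val_one, Matrix.head_cons]; try module) (by simp only [Matrix.cons_val_zero, Matrix.cons_val_one, Matrix.head_cons]; try ring) (by simp only [Matrix.cons_val_zero, Matrix.cons_val_one, Matrix.head_cons]; try ring)]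
    rw [opR_subst D pr (-(Xv 0) - Xv 1) (-1) h.pr_add_right h.pr_smul_right h.pr_sesq_right c (-(Xv 0)) (-1) (cu b a) (![Xv 1, -(Xv 0) - Xv 1] : Fin 2 → MP 2 ℂ) (![0, -1] : Fin 2 → ℂ) (by simp only [Matrix.cons_val_zero, Matrix.cons_val_one, Matrix.head_cons]; try module) (by simp only [Matrix.cons_val_zero, Matrix.cons_val_one, Matrix.head_cons]; try module) (by simp only [Matrix.cons_val_zero, Matrix.cons_val_one, Matrix.head_cons]; try ring) (by simp only [Matrix.cons_val_zero, Matrix.cons_val_one, Matrix.head_cons]; try ring)]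
    rw [cx1 a b c, e2, e3, e4, ← e5, ← e6]
    abel
  case ns2 =>
    intro a b c
    have lie_eq : ∀ x y : A, lieNS D (fun x y => su x y - sub1 D (pr y x)) (fun x y => cu x y - sub1 D (cu y x)) x y = (su x y + pr x y + cu x y) - (sub1 D (su y x) + sub1 D (pr y x) + sub1 D (cu y x)) := by
      intro x y
      show (su x y - sub1 D (pr y x)) - sub1 D (su y x - sub1 D (pr x y)) + (cu x y - sub1 D (cu y x)) = _
      rw [sub1_subp, sub1_sub1]
      abel
    have cx4 : ∀ x y z : A, substFun D (![Xv 1, Xv 0] : Fin 2 → MP 2 ℂ) (![0, 0] : Fin 2 → ℂ) (opR D su (Xv 1) 0 x (renameV (fun _ => (0 : Fin 2)) (cu y z))) - (substFun D (![Xv 0, Xv 0 + Xv 1] : Fin 2 → MP 2 ℂ) (![0, 0] : Fin 2 → ℂ) (opL D cu (Xv 1) 0 (renameV (fun _ => (0 : Fin 2)) (su x y)) z) + substFun D (![Xv 0, Xv 0 + Xv 1] : Fin 2 → MP 2 ℂ) (![0, 0] : Fin 2 → ℂ) (opL D cu (Xv 1) 0 (renameV (fun _ => (0 : Fin 2)) (pr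 x y)) z) + substFun D (![Xv 0, Xv 0 + Xv 1] : Fin 2 → MP 2 ℂ) (![0, 0] : Fin 2 → ℂ) (opL D cu (Xv 1) 0 (renameV (fun _ => (0 : Fin 2)) (cu x y)) z)) = substFun D (![Xv 0, Xv 0 + Xv 1] : Fin 2 → MP 2 ℂ) (![0, 0] : Fin 2 → ℂ) (opL D pr (Xv 1) 0 (renameV (fun _ => (0 : Fin 2)) (cu x y)) z) - (substFun D (![Xv 1, Xv 0] : Fin 2 → MP 2 ℂ) (![0, 0] : Fin 2 → ℂ) (opR D cu (Xv 1) 0 x (renameV (fun _ => (0 : Fin 2)) (su y z))) + substFun D (![Xv 1, Xv 0] : Fin 2 → MP 2 ℂ) (![0, 0] : Fin 2 → ℂ) (opR D cu (Xv 1) 0 x (renameV (fun _ => (0 : Fin 2)) (pr y z))) + substFun D (![Xv 1, Xv 0] : Fin 2 → MP 2 ℂ) (![0, 0] : Fin 2 → ℂ) (opR D cu (Xv 1) 0 x (renameV (fun _ => (0 : Fin 2)) (cu y z)))) := by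
      intro x y z
      have t := h.ax4 x y z
      simp only [renameV_addp] at t
      simp only [renameV_eq_substFun D] at t
      rw [opL_addp D cu (Xv 0 + Xv 1) 0 h.cu_add_left, opL_addp D cu (Xv 0 + Xv 1) 0 h.cu_add_left, opR_addp D cu (Xv 0) 0 h.cu_add_right, opR_addp D cu (Xv 0) 0 h.cu_add_right] at t
      rw [opR_subst D su (Xv 0) (0) h.su_add_right h.su_smul_right h.su_sesq_right x (Xv 1) (0) (cu y z) (![Xv 1, Xv 0] : Fin 2 → MP 2 ℂ) (![0, 0] : Fin 2 → ℂ) (by simp only [Matrix.cons_val_zero, Matrix.cons_val_one, Matrix.head_cons]; try module) (by simp only [Matrix.cons_val_zero, Matrix.cons_val_one, Matrix.head_cons]; try module) (by simp only [Matrix.cons_val_zero, Matrix.cons_val_one, Matrix.head_cons]; try ring) (by simp only [Matrix.cons_val_zero, Matrix.cons_val_one, Matrix.head_cons]; try ring), opL_subst D cu (Xv 0 + Xv 1) (0) h.cu_add_left h.cu_smul_left h.cu_sesq_left z (Xv 0) (0) (su x y) (![Xv 0, Xv 0 + Xv 1] : Fin 2 → MP 2 ℂ) (![0, 0] : Fin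 2 → ℂ) (by simp only [Matrix.cons_val_zero, Matrix.cons_val_one, Matrix.head_cons]; try module) (by simp only [Matrix.cons_val_zero, Matrix.cons_val_one, Matrix.head_cons]; try module) (by simp only [Matrix.cons_val_zero, Matrix.cons_val_one, Matrix.head_cons]; try ring) (by simp only [Matrix.cons_val_zero, Matrix.cons_val_one, Matrix.head_cons]; try ring), opL_subst D cu (Xv 0 + Xv 1) (0) h.cu_add_left h.cu_smul_left h.cu_sesq_left z (Xv 0) (0) (pr x y) (![Xv 0, Xv 0 + Xv 1] : Fin 2 → MP 2 ℂ) (![0, 0] : Fin 2 → ℂ) (by simp only [Matrix.cons_val_zero, Matrix.cons_val_one, Matrix.head_cons]; try module) (by simp only [Matrix.cons_val_zero, Matrix.cons_val_one, Matrix.head_cons]; try module) (by simp only [Matrix.cons_val_zero, Matrix.cons_val_one, Matrix.head_cons]; try ring) (by simp only [Matrix.cons_val_zero, Matrix.cons_val_one, Matrix.head_cons]; try ring), opL_subst D cu (Xv 0 + Xv 1) (0) h.cu_add_left h.cu_smul_left h.cu_sesq_left z (Xv 0) (0) (cu x y) (![Xv 0, Xv 0 + Xv 1] : Fin 2 → MP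 2 ℂ) (![0, 0] : Fin 2 → ℂ) (by simp only [Matrix.cons_val_zero, Matrix.cons_val_one, Matrix.head_cons]; try module) (by simp only [Matrix.cons_val_zero, Matrix.cons_val_one, Matrix.head_cons]; try module) (by simp only [Matrix.cons_val_zero, Matrix.cons_val_one, Matrix.head_cons]; try ring) (by simp only [Matrix.cons_val_zero, Matrix.cons_val_one, Matrix.head_cons]; try ring), opL_subst D pr (Xv 0 + Xv 1) (0) h.pr_add_left h.pr_smul_left h.pr_sesq_left z (Xv 0) (0) (cu x y) (![Xv 0, Xv 0 + Xv 1] : Fin 2 → MP 2 ℂ) (![0, 0] : Fin 2 → ℂ) (by simp only [Matrix.cons_val_zero, Matrix.cons_val_one, Matrix.head_cons]; try module) (by simp only [Matrix.cons_val_zero, Matrix.cons_val_one, Matrix.head_cons]; try module) (by simp only [Matrix.cons_val_zero, Matrix.cons_val_one, Matrix.head_cons]; try ring) (by simp only [Matrix.cons_val_zero, Matrix.cons_val_one, Matrix.head_cons]; try ring), opR_subst D cu (Xv 0) (0) h.cu_add_right h.cu_smul_right h.cu_sesq_right x (Xv 1) (0) (su y z) (![Xv 1, Xv 0] : Fin 2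 → MP 2 ℂ) (![0, 0] : Fin 2 → ℂ) (by simp only [Matrix.cons_val_zero, Matrix.cons_val_one, Matrix.head_cons]; try module) (by simp only [Matrix.cons_val_zero, Matrix.cons_val_one, Matrix.head_cons]; try module) (by simp only [Matrix.cons_val_zero, Matrix.cons_val_one, Matrix.head_cons]; try ring) (by simp only [Matrix.cons_val_zero, Matrix.cons_val_one, Matrix.head_cons]; try ring), opR_subst D cu (Xv 0) (0) h.cu_add_right h.cu_smul_right h.cu_sesq_right x (Xv 1) (0) (pr y z) (![Xv 1, Xv 0] : Fin 2 → MP 2 ℂ) (![0, 0] : Fin 2 → ℂ) (by simp only [Matrix.cons_val_zero, Matrix.cons_val_one, Matrix.head_cons]; try module) (by simp only [Matrix.cons_val_zero, Matrix.cons_val_one, Matrix.head_cons]; try module) (by simp only [Matrix.cons_val_zero, Matrix.cons_val_one, Matrix.head_cons]; try ring) (by simp only [Matrix.cons_val_zero, Matrix.cons_val_one, Matrix.head_cons]; try ring), opR_subst D cu (Xv 0) (0) h.cu_add_right h.cu_smul_right h.cu_sesq_right x (Xv 1) (0) (cu y z) (![Xv 1, Xv 0] : Fin 2 → MP 2 ℂ)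 (![0, 0] : Fin 2 → ℂ) (by simp only [Matrix.cons_val_zero, Matrix.cons_val_one, Matrix.head_cons]; try module) (by simp only [Matrix.cons_val_zero, Matrix.cons_val_one, Matrix.head_cons]; try module) (by simp only [Matrix.cons_val_zero, Matrix.cons_val_one, Matrix.head_cons]; try ring) (by simp only [Matrix.cons_val_zero, Matrix.cons_val_one, Matrix.head_cons]; try ring)] at t
      exact t
    have f1 := cx4 a b c
    rw [sub_eq_iff_eq_add] at f1
    have f2 := congrArg (substFun D (![Xv 1, Xv 0] : Fin 2 → MP 2 ℂ) (![0, 0] : Fin 2 → ℂ)) (cx4 b a c)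
    simp only [substFun_subp2, substFun_addp2] at f2
    simp only [comp_swap D (Xv 1) (Xv 0) (0) (0) (Xv 0) (Xv 1) (0) (0) (by module) (by module) (by ring) (by ring), comp_aL D (Xv 1) (Xv 0) (0) (0) (Xv 1) (Xv 0 + Xv 1) (0) (0) (by module) (by module) (by ring) (by ring)] at f2
    rw [sub_eq_iff_eq_add] at f2
    have f3 := congrArg (substFun D (![-(Xv 0) - Xv 1, Xv 0] : Fin 2 → MP 2 ℂ) (![-1, 0] : Fin 2 → ℂ)) (cx4 c a b)
    simp only [substFun_subp2, substFun_addp2] at f3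
    simp only [comp_swap D (-(Xv 0) - Xv 1) (Xv 0) (-1) (0) (Xv 0) (-(Xv 0) - Xv 1) (0) (-1) (by module) (by module) (by ring) (by ring), comp_aL D (-(Xv 0) - Xv 1) (Xv 0) (-1) (0) (-(Xv 0) - Xv 1) (-(Xv 1)) (-1) (-1) (by module) (by module) (by ring) (by ring)] at f3
    rw [sub_eq_iff_eq_add] at f3
    have f4 := congrArg (substFun D (![-(Xv 0) - Xv 1, Xv 1] : Fin 2 → MP 2 ℂ) (![-1, 0] : Fin 2 → ℂ)) (cx4 c b a)
    simp only [substFun_subp2, substFun_addp2] at f4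
    simp only [comp_swap D (-(Xv 0) - Xv 1) (Xv 1) (-1) (0) (Xv 1) (-(Xv 0) - Xv 1) (0) (-1) (by module) (by module) (by ring) (by ring), comp_aL D (-(Xv 0) - Xv 1) (Xv 1) (-1) (0) (-(Xv 0) - Xv 1) (-(Xv 0)) (-1) (-1) (by module) (by module) (by ring) (by ring)] at f4
    rw [sub_eq_iff_eq_add] at f4
    have f5 := congrArg (substFun D (![Xv 0, -(Xv 0) - Xv 1] : Fin 2 → MP 2 ℂ) (![0, -1] : Fin 2 → ℂ)) (cx4 a c b)
    simp only [substFun_subp2, substFun_addp2] at f5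
    simp only [comp_swap D (Xv 0) (-(Xv 0) - Xv 1) (0) (-1) (-(Xv 0) - Xv 1) (Xv 0) (-1) (0) (by module) (by module) (by ring) (by ring), comp_aL D (Xv 0) (-(Xv 0) - Xv 1) (0) (-1) (Xv 0) (-(Xv 1)) (0) (-1) (by module) (by module) (by ring) (by ring)] at f5
    rw [sub_eq_iff_eq_add] at f5
    have f6 := congrArg (substFun D (![Xv 1, -(Xv 0) - Xv 1] : Fin 2 → MP 2 ℂ) (![0, -1] : Fin 2 → ℂ)) (cx4 b c a)
    simp only [substFun_subp2, substFun_addp2] at f6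
    simp only [comp_swap D (Xv 1) (-(Xv 0) - Xv 1) (0) (-1) (-(Xv 0) - Xv 1) (Xv 1) (-1) (0) (by module) (by module) (by ring) (by ring), comp_aL D (Xv 1) (-(Xv 0) - Xv 1) (0) (-1) (Xv 1) (-(Xv 0)) (0) (-1) (by module) (by module) (by ring) (by ring)] at f6
    rw [sub_eq_iff_eq_add] at f6
    have Lsu := fun (q : MP 2 ℂ) (c0 : ℂ) => opL_subp D su q c0 h.su_add_left
    have Lpr := fun (q : MP 2 ℂ) (c0 : ℂ) => opL_subp D pr q c0 h.pr_add_left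
    have Lcu := fun (q : MP 2 ℂ) (c0 : ℂ) => opL_subp D cu q c0 h.cu_add_left
    have Rsu := fun (q : MP 2 ℂ) (c0 : ℂ) => opR_subp D su q c0 h.su_add_right
    have Rpr := fun (q : MP 2 ℂ) (c0 : ℂ) => opR_subp D pr q c0 h.pr_add_right
    have Rcu := fun (q : MP 2 ℂ) (c0 : ℂ) => opR_subp D cu q c0 h.cu_add_right
    have LAsu := fun (q : MP 2 ℂ) (c0 : ℂ) => opL_addp D su q c0 h.su_add_left
    have LApr := fun (q : MP 2 ℂ) (c0 : ℂ) => opL_addp D pr q c0 h.pr_add_left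
    have LAcu := fun (q : MP 2 ℂ) (c0 : ℂ) => opL_addp D cu q c0 h.cu_add_left
    have RAsu := fun (q : MP 2 ℂ) (c0 : ℂ) => opR_addp D su q c0 h.su_add_right
    have RApr := fun (q : MP 2 ℂ) (c0 : ℂ) => opR_addp D pr q c0 h.pr_add_right
    have RAcu := fun (q : MP 2 ℂ) (c0 : ℂ) => opR_addp D cu q c0 h.cu_add_right
    simp only [lie_eq]
    simp only [renameV_subp, renameV_addp]
    simp only [renameV_sub1 D]
    simp only [renameV_eq_substFun D]
    simp only [opL_Fsub D, opR_Fsub D]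
    simp only [opL_flip D cu (Xv 0 + Xv 1) 0 (-(Xv 0) - Xv 1) (-1) (by module) (by ring), opR_flip D cu (Xv 0) 0 (-(Xv 0)) (-1) (by module) (by ring), opR_flip D cu (Xv 1) 0 (-(Xv 1)) (-1) (by module) (by ring), opR_flip D pr (Xv 0) 0 (-(Xv 0)) (-1) (by module) (by ring), opR_flip D pr (Xv 1) 0 (-(Xv 1)) (-1) (by module) (by ring), opR_flip D pr (-(Xv 0) - Xv 1) (-1) (Xv 0 + Xv 1) 0 (by module) (by ring)]
    simp only [Lsu, Lpr, Lcu, Rsu, Rpr, Rcu, LAsu, LApr, LAcu, RAsu, RApr, RAcu]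
    rw [opR_subst D cu (Xv 0) (0) h.cu_add_right h.cu_smul_right h.cu_sesq_right a (Xv 1) (0) (su b c) (![Xv 1, Xv 0] : Fin 2 → MP 2 ℂ) (![0, 0] : Fin 2 → ℂ) (by simp only [Matrix.cons_val_zero, Matrix.cons_val_one, Matrix.head_cons]; try module) (by simp only [Matrix.cons_val_zero, Matrix.cons_val_one, Matrix.head_cons]; try module) (by simp only [Matrix.cons_val_zero, Matrix.cons_val_one, Matrix.head_cons]; try ring) (by simp only [Matrix.cons_val_zero, Matrix.cons_val_one, Matrix.head_cons]; try ring)]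
    rw [opR_subst D cu (Xv 0) (0) h.cu_add_right h.cu_smul_right h.cu_sesq_right a (Xv 1) (0) (pr b c) (![Xv 1, Xv 0] : Fin 2 → MP 2 ℂ) (![0, 0] : Fin 2 → ℂ) (by simp only [Matrix.cons_val_zero, Matrix.cons_val_one, Matrix.head_cons]; try module) (by simp only [Matrix.cons_val_zero, Matrix.cons_val_one, Matrix.head_cons]; try module) (by simp only [Matrix.cons_val_zero, Matrix.cons_val_one, Matrix.head_cons]; try ring) (by simp only [Matrix.cons_val_zero, Matrix.cons_val_one, Matrix.head_cons]; try ring)]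
    rw [opR_subst D cu (Xv 0) (0) h.cu_add_right h.cu_smul_right h.cu_sesq_right a (Xv 1) (0) (cu b c) (![Xv 1, Xv 0] : Fin 2 → MP 2 ℂ) (![0, 0] : Fin 2 → ℂ) (by simp only [Matrix.cons_val_zero, Matrix.cons_val_one, Matrix.head_cons]; try module) (by simp only [Matrix.cons_val_zero, Matrix.cons_val_one, Matrix.head_cons]; try module) (by simp only [Matrix.cons_val_zero, Matrix.cons_val_one, Matrix.head_cons]; try ring) (by simp only [Matrix.cons_val_zero, Matrix.cons_val_one, Matrix.head_cons]; try ring)]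
    rw [opR_subst D cu (Xv 0) (0) h.cu_add_right h.cu_smul_right h.cu_sesq_right a (-(Xv 1)) (-1) (su c b) (![-(Xv 0) - Xv 1, Xv 0] : Fin 2 → MP 2 ℂ) (![-1, 0] : Fin 2 → ℂ) (by simp only [Matrix.cons_val_zero, Matrix.cons_val_one, Matrix.head_cons]; try module) (by simp only [Matrix.cons_val_zero, Matrix.cons_val_one, Matrix.head_cons]; try module) (by simp only [Matrix.cons_val_zero, Matrix.cons_val_one, Matrix.head_cons]; try ring) (by simp only [Matrix.cons_val_zero, Matrix.cons_val_one, Matrix.head_cons]; try ring)]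
    rw [opR_subst D cu (Xv 0) (0) h.cu_add_right h.cu_smul_right h.cu_sesq_right a (-(Xv 1)) (-1) (pr c b) (![-(Xv 0) - Xv 1, Xv 0] : Fin 2 → MP 2 ℂ) (![-1, 0] : Fin 2 → ℂ) (by simp only [Matrix.cons_val_zero, Matrix.cons_val_one, Matrix.head_cons]; try module) (by simp only [Matrix.cons_val_zero, Matrix.cons_val_one, Matrix.head_cons]; try module) (by simp only [Matrix.cons_val_zero, Matrix.cons_val_one, Matrix.head_cons]; try ring) (by simp only [Matrix.cons_val_zero, Matrix.cons_val_one, Matrix.head_cons]; try ring)]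
    rw [opR_subst D cu (Xv 0) (0) h.cu_add_right h.cu_smul_right h.cu_sesq_right a (-(Xv 1)) (-1) (cu c b) (![-(Xv 0) - Xv 1, Xv 0] : Fin 2 → MP 2 ℂ) (![-1, 0] : Fin 2 → ℂ) (by simp only [Matrix.cons_val_zero, Matrix.cons_val_one, Matrix.head_cons]; try module) (by simp only [Matrix.cons_val_zero, Matrix.cons_val_one, Matrix.head_cons]; try module) (by simp only [Matrix.cons_val_zero, Matrix.cons_val_one, Matrix.head_cons]; try ring) (by simp only [Matrix.cons_val_zero, Matrix.cons_val_one, Matrix.head_cons]; try ring)]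
    rw [opL_subst D cu (-(Xv 0)) (-1) h.cu_add_left h.cu_smul_left h.cu_sesq_left a (Xv 1) (0) (su b c) (![Xv 1, -(Xv 0)] : Fin 2 → MP 2 ℂ) (![0, -1] : Fin 2 → ℂ) (by simp only [Matrix.cons_val_zero, Matrix.cons_val_one, Matrix.head_cons]; try module) (by simp only [Matrix.cons_val_zero, Matrix.cons_val_one, Matrix.head_cons]; try module) (by simp only [Matrix.cons_val_zero, Matrix.cons_val_one, Matrix.head_cons]; try ring) (by simp only [Matrix.cons_val_zero, Matrix.cons_val_one, Matrix.head_cons]; try ring)]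
    rw [opL_subst D cu (-(Xv 0)) (-1) h.cu_add_left h.cu_smul_left h.cu_sesq_left a (Xv 1) (0) (pr b c) (![Xv 1, -(Xv 0)] : Fin 2 → MP 2 ℂ) (![0, -1] : Fin 2 → ℂ) (by simp only [Matrix.cons_val_zero, Matrix.cons_val_one, Matrix.head_cons]; try module) (by simp only [Matrix.cons_val_zero, Matrix.cons_val_one, Matrix.head_cons]; try module) (by simp only [Matrix.cons_val_zero, Matrix.cons_val_one, Matrix.head_cons]; try ring) (by simp only [Matrix.cons_val_zero, Matrix.cons_val_one, Matrix.head_cons]; try ring)]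
    rw [opL_subst D cu (-(Xv 0)) (-1) h.cu_add_left h.cu_smul_left h.cu_sesq_left a (Xv 1) (0) (cu b c) (![Xv 1, -(Xv 0)] : Fin 2 → MP 2 ℂ) (![0, -1] : Fin 2 → ℂ) (by simp only [Matrix.cons_val_zero, Matrix.cons_val_one, Matrix.head_cons]; try module) (by simp only [Matrix.cons_val_zero, Matrix.cons_val_one, Matrix.head_cons]; try module) (by simp only [Matrix.cons_val_zero, Matrix.cons_val_one, Matrix.head_cons]; try ring) (by simp only [Matrix.cons_val_zero, Matrix.cons_val_one, Matrix.head_cons]; try ring)]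
    rw [opL_subst D cu (-(Xv 0)) (-1) h.cu_add_left h.cu_smul_left h.cu_sesq_left a (-(Xv 1)) (-1) (su c b) (![-(Xv 0) - Xv 1, -(Xv 0)] : Fin 2 → MP 2 ℂ) (![-1, -1] : Fin 2 → ℂ) (by simp only [Matrix.cons_val_zero, Matrix.cons_val_one, Matrix.head_cons]; try module) (by simp only [Matrix.cons_val_zero, Matrix.cons_val_one, Matrix.head_cons]; try module) (by simp only [Matrix.cons_val_zero, Matrix.cons_val_one, Matrix.head_cons]; try ring) (by simp only [Matrix.cons_val_zero, Matrix.cons_val_one, Matrix.head_cons]; try ring)]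
    rw [opL_subst D cu (-(Xv 0)) (-1) h.cu_add_left h.cu_smul_left h.cu_sesq_left a (-(Xv 1)) (-1) (pr c b) (![-(Xv 0) - Xv 1, -(Xv 0)] : Fin 2 → MP 2 ℂ) (![-1, -1] : Fin 2 → ℂ) (by simp only [Matrix.cons_val_zero, Matrix.cons_val_one, Matrix.head_cons]; try module) (by simp only [Matrix.cons_val_zero, Matrix.cons_val_one, Matrix.head_cons]; try module) (by simp only [Matrix.cons_val_zero, Matrix.cons_val_one, Matrix.head_cons]; try ring) (by simp only [Matrix.cons_val_zero, Matrix.cons_val_one, Matrix.head_cons]; try ring)]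
    rw [opL_subst D cu (-(Xv 0)) (-1) h.cu_add_left h.cu_smul_left h.cu_sesq_left a (-(Xv 1)) (-1) (cu c b) (![-(Xv 0) - Xv 1, -(Xv 0)] : Fin 2 → MP 2 ℂ) (![-1, -1] : Fin 2 → ℂ) (by simp only [Matrix.cons_val_zero, Matrix.cons_val_one, Matrix.head_cons]; try module) (by simp only [Matrix.cons_val_zero, Matrix.cons_val_one, Matrix.head_cons]; try module) (by simp only [Matrix.cons_val_zero, Matrix.cons_val_one, Matrix.head_cons]; try ring) (by simp only [Matrix.cons_val_zero, Matrix.cons_val_one, Matrix.head_cons]; try ring)]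
    rw [opL_subst D cu (Xv 0 + Xv 1) (0) h.cu_add_left h.cu_smul_left h.cu_sesq_left c (Xv 0) (0) (su a b) (![Xv 0, Xv 0 + Xv 1] : Fin 2 → MP 2 ℂ) (![0, 0] : Fin 2 → ℂ) (by simp only [Matrix.cons_val_zero, Matrix.cons_val_one, Matrix.head_cons]; try module) (by simp only [Matrix.cons_val_zero, Matrix.cons_val_one, Matrix.head_cons]; try module) (by simp only [Matrix.cons_val_zero, Matrix.cons_val_one, Matrix.head_cons]; try ring) (by simp only [Matrix.cons_val_zero, Matrix.cons_val_one, Matrix.head_cons]; try ring)]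
    rw [opL_subst D cu (Xv 0 + Xv 1) (0) h.cu_add_left h.cu_smul_left h.cu_sesq_left c (Xv 0) (0) (pr a b) (![Xv 0, Xv 0 + Xv 1] : Fin 2 → MP 2 ℂ) (![0, 0] : Fin 2 → ℂ) (by simp only [Matrix.cons_val_zero, Matrix.cons_val_one, Matrix.head_cons]; try module) (by simp only [Matrix.cons_val_zero, Matrix.cons_val_one, Matrix.head_cons]; try module) (by simp only [Matrix.cons_val_zero, Matrix.cons_val_one, Matrix.head_cons]; try ring) (by simp only [Matrix.cons_val_zero, Matrix.cons_val_one, Matrix.head_cons]; try ring)]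
    rw [opL_subst D cu (Xv 0 + Xv 1) (0) h.cu_add_left h.cu_smul_left h.cu_sesq_left c (Xv 0) (0) (cu a b) (![Xv 0, Xv 0 + Xv 1] : Fin 2 → MP 2 ℂ) (![0, 0] : Fin 2 → ℂ) (by simp only [Matrix.cons_val_zero, Matrix.cons_val_one, Matrix.head_cons]; try module) (by simp only [Matrix.cons_val_zero, Matrix.cons_val_one, Matrix.head_cons]; try module) (by simp only [Matrix.cons_val_zero, Matrix.cons_val_one, Matrix.head_cons]; try ring) (by simp only [Matrix.cons_val_zero, Matrix.cons_val_one, Matrix.head_cons]; try ring)]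
    rw [opL_subst D cu (Xv 0 + Xv 1) (0) h.cu_add_left h.cu_smul_left h.cu_sesq_left c (-(Xv 0)) (-1) (su b a) (![Xv 1, Xv 0 + Xv 1] : Fin 2 → MP 2 ℂ) (![0, 0] : Fin 2 → ℂ) (by simp only [Matrix.cons_val_zero, Matrix.cons_val_one, Matrix.head_cons]; try module) (by simp only [Matrix.cons_val_zero, Matrix.cons_val_one, Matrix.head_cons]; try module) (by simp only [Matrix.cons_val_zero, Matrix.cons_val_one, Matrix.head_cons]; try ring) (by simp only [Matrix.cons_val_zero, Matrix.cons_val_one, Matrix.head_cons]; try ring)]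
    rw [opL_subst D cu (Xv 0 + Xv 1) (0) h.cu_add_left h.cu_smul_left h.cu_sesq_left c (-(Xv 0)) (-1) (pr b a) (![Xv 1, Xv 0 + Xv 1] : Fin 2 → MP 2 ℂ) (![0, 0] : Fin 2 → ℂ) (by simp only [Matrix.cons_val_zero, Matrix.cons_val_one, Matrix.head_cons]; try module) (by simp only [Matrix.cons_val_zero, Matrix.cons_val_one, Matrix.head_cons]; try module) (by simp only [Matrix.cons_val_zero, Matrix.cons_val_one, Matrix.head_cons]; try ring) (by simp only [Matrix.cons_val_zero, Matrix.cons_val_one, Matrix.head_cons]; try ring)]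
    rw [opL_subst D cu (Xv 0 + Xv 1) (0) h.cu_add_left h.cu_smul_left h.cu_sesq_left c (-(Xv 0)) (-1) (cu b a) (![Xv 1, Xv 0 + Xv 1] : Fin 2 → MP 2 ℂ) (![0, 0] : Fin 2 → ℂ) (by simp only [Matrix.cons_val_zero, Matrix.cons_val_one, Matrix.head_cons]; try module) (by simp only [Matrix.cons_val_zero, Matrix.cons_val_one, Matrix.head_cons]; try module) (by simp only [Matrix.cons_val_zero, Matrix.cons_val_one, Matrix.head_cons]; try ring) (by simp only [Matrix.cons_val_zero, Matrix.cons_val_one, Matrix.head_cons]; try ring)]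
    rw [opR_subst D cu (-(Xv 0) - Xv 1) (-1) h.cu_add_right h.cu_smul_right h.cu_sesq_right c (Xv 0) (0) (su a b) (![Xv 0, -(Xv 0) - Xv 1] : Fin 2 → MP 2 ℂ) (![0, -1] : Fin 2 → ℂ) (by simp only [Matrix.cons_val_zero, Matrix.cons_val_one, Matrix.head_cons]; try module) (by simp only [Matrix.cons_val_zero, Matrix.cons_val_one, Matrix.head_cons]; try module) (by simp only [Matrix.cons_val_zero, Matrix.cons_val_one, Matrix.head_cons]; try ring) (by simp only [Matrix.cons_val_zero, Matrix.cons_val_one, Matrix.head_cons]; try ring)]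
    rw [opR_subst D cu (-(Xv 0) - Xv 1) (-1) h.cu_add_right h.cu_smul_right h.cu_sesq_right c (Xv 0) (0) (pr a b) (![Xv 0, -(Xv 0) - Xv 1] : Fin 2 → MP 2 ℂ) (![0, -1] : Fin 2 → ℂ) (by simp only [Matrix.cons_val_zero, Matrix.cons_val_one, Matrix.head_cons]; try module) (by simp only [Matrix.cons_val_zero, Matrix.cons_val_one, Matrix.head_cons]; try module) (by simp only [Matrix.cons_val_zero, Matrix.cons_val_one, Matrix.head_cons]; try ring) (by simp only [Matrix.cons_val_zero, Matrix.cons_val_one, Matrix.head_cons]; try ring)]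
    rw [opR_subst D cu (-(Xv 0) - Xv 1) (-1) h.cu_add_right h.cu_smul_right h.cu_sesq_right c (Xv 0) (0) (cu a b) (![Xv 0, -(Xv 0) - Xv 1] : Fin 2 → MP 2 ℂ) (![0, -1] : Fin 2 → ℂ) (by simp only [Matrix.cons_val_zero, Matrix.cons_val_one, Matrix.head_cons]; try module) (by simp only [Matrix.cons_val_zero, Matrix.cons_val_one, Matrix.head_cons]; try module) (by simp only [Matrix.cons_val_zero, Matrix.cons_val_one, Matrix.head_cons]; try ring) (by simp only [Matrix.cons_val_zero, Matrix.cons_val_one, Matrix.head_cons]; try ring)]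
    rw [opR_subst D cu (-(Xv 0) - Xv 1) (-1) h.cu_add_right h.cu_smul_right h.cu_sesq_right c (-(Xv 0)) (-1) (su b a) (![Xv 1, -(Xv 0) - Xv 1] : Fin 2 → MP 2 ℂ) (![0, -1] : Fin 2 → ℂ) (by simp only [Matrix.cons_val_zero, Matrix.cons_val_one, Matrix.head_cons]; try module) (by simp only [Matrix.cons_val_zero, Matrix.cons_val_one, Matrix.head_cons]; try module) (by simp only [Matrix.cons_val_zero, Matrix.cons_val_one, Matrix.head_cons]; try ring) (by simp only [Matrix.cons_val_zero, Matrix.cons_val_one, Matrix.head_cons]; try ring)]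
    rw [opR_subst D cu (-(Xv 0) - Xv 1) (-1) h.cu_add_right h.cu_smul_right h.cu_sesq_right c (-(Xv 0)) (-1) (pr b a) (![Xv 1, -(Xv 0) - Xv 1] : Fin 2 → MP 2 ℂ) (![0, -1] : Fin 2 → ℂ) (by simp only [Matrix.cons_val_zero, Matrix.cons_val_one, Matrix.head_cons]; try module) (by simp only [Matrix.cons_val_zero, Matrix.cons_val_one, Matrix.head_cons]; try module) (by simp only [Matrix.cons_val_zero, Matrix.cons_val_one, Matrix.head_cons]; try ring) (by simp only [Matrix.cons_val_zero, Matrix.cons_val_one, Matrix.head_cons]; try ring)]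
    rw [opR_subst D cu (-(Xv 0) - Xv 1) (-1) h.cu_add_right h.cu_smul_right h.cu_sesq_right c (-(Xv 0)) (-1) (cu b a) (![Xv 1, -(Xv 0) - Xv 1] : Fin 2 → MP 2 ℂ) (![0, -1] : Fin 2 → ℂ) (by simp only [Matrix.cons_val_zero, Matrix.cons_val_one, Matrix.head_cons]; try module) (by simp only [Matrix.cons_val_zero, Matrix.cons_val_one, Matrix.head_cons]; try module) (by simp only [Matrix.cons_val_zero, Matrix.cons_val_one, Matrix.head_cons]; try ring) (by simp only [Matrix.cons_val_zero, Matrix.cons_val_one, Matrix.head_cons]; try ring)]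
    rw [opR_subst D cu (Xv 1) (0) h.cu_add_right h.cu_smul_right h.cu_sesq_right b (Xv 0) (0) (su a c) (![Xv 0, Xv 1] : Fin 2 → MP 2 ℂ) (![0, 0] : Fin 2 → ℂ) (by simp only [Matrix.cons_val_zero, Matrix.cons_val_one, Matrix.head_cons]; try module) (by simp only [Matrix.cons_val_zero, Matrix.cons_val_one, Matrix.head_cons]; try module) (by simp only [Matrix.cons_val_zero, Matrix.cons_val_one, Matrix.head_cons]; try ring) (by simp only [Matrix.cons_val_zero, Matrix.cons_val_one, Matrix.head_cons]; try ring)]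
    rw [opR_subst D cu (Xv 1) (0) h.cu_add_right h.cu_smul_right h.cu_sesq_right b (Xv 0) (0) (pr a c) (![Xv 0, Xv 1] : Fin 2 → MP 2 ℂ) (![0, 0] : Fin 2 → ℂ) (by simp only [Matrix.cons_val_zero, Matrix.cons_val_one, Matrix.head_cons]; try module) (by simp only [Matrix.cons_val_zero, Matrix.cons_val_one, Matrix.head_cons]; try module) (by simp only [Matrix.cons_val_zero, Matrix.cons_val_one, Matrix.head_cons]; try ring) (by simp only [Matrix.cons_val_zero, Matrix.cons_val_one, Matrix.head_cons]; try ring)]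
    rw [opR_subst D cu (Xv 1) (0) h.cu_add_right h.cu_smul_right h.cu_sesq_right b (Xv 0) (0) (cu a c) (![Xv 0, Xv 1] : Fin 2 → MP 2 ℂ) (![0, 0] : Fin 2 → ℂ) (by simp only [Matrix.cons_val_zero, Matrix.cons_val_one, Matrix.head_cons]; try module) (by simp only [Matrix.cons_val_zero, Matrix.cons_val_one, Matrix.head_cons]; try module) (by simp only [Matrix.cons_val_zero, Matrix.cons_val_one, Matrix.head_cons]; try ring) (by simp only [Matrix.cons_val_zero, Matrix.cons_val_one, Matrix.head_cons]; try ring)]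
    rw [opR_subst D cu (Xv 1) (0) h.cu_add_right h.cu_smul_right h.cu_sesq_right b (-(Xv 0)) (-1) (su c a) (![-(Xv 0) - Xv 1, Xv 1] : Fin 2 → MP 2 ℂ) (![-1, 0] : Fin 2 → ℂ) (by simp only [Matrix.cons_val_zero, Matrix.cons_val_one, Matrix.head_cons]; try module) (by simp only [Matrix.cons_val_zero, Matrix.cons_val_one, Matrix.head_cons]; try module) (by simp only [Matrix.cons_val_zero, Matrix.cons_val_one, Matrix.head_cons]; try ring) (by simp only [Matrix.cons_val_zero, Matrix.cons_val_one, Matrix.head_cons]; try ring)]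
    rw [opR_subst D cu (Xv 1) (0) h.cu_add_right h.cu_smul_right h.cu_sesq_right b (-(Xv 0)) (-1) (pr c a) (![-(Xv 0) - Xv 1, Xv 1] : Fin 2 → MP 2 ℂ) (![-1, 0] : Fin 2 → ℂ) (by simp only [Matrix.cons_val_zero, Matrix.cons_val_one, Matrix.head_cons]; try module) (by simp only [Matrix.cons_val_zero, Matrix.cons_val_one, Matrix.head_cons]; try module) (by simp only [Matrix.cons_val_zero, Matrix.cons_val_one, Matrix.head_cons]; try ring) (by simp only [Matrix.cons_val_zero, Matrix.cons_val_one, Matrix.head_cons]; try ring)]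
    rw [opR_subst D cu (Xv 1) (0) h.cu_add_right h.cu_smul_right h.cu_sesq_right b (-(Xv 0)) (-1) (cu c a) (![-(Xv 0) - Xv 1, Xv 1] : Fin 2 → MP 2 ℂ) (![-1, 0] : Fin 2 → ℂ) (by simp only [Matrix.cons_val_zero, Matrix.cons_val_one, Matrix.head_cons]; try module) (by simp only [Matrix.cons_val_zero, Matrix.cons_val_one, Matrix.head_cons]; try module) (by simp only [Matrix.cons_val_zero, Matrix.cons_val_one, Matrix.head_cons]; try ring) (by simp only [Matrix.cons_val_zero, Matrix.cons_val_one, Matrix.head_cons]; try ring)]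
    rw [opL_subst D cu (-(Xv 1)) (-1) h.cu_add_left h.cu_smul_left h.cu_sesq_left b (Xv 0) (0) (su a c) (![Xv 0, -(Xv 1)] : Fin 2 → MP 2 ℂ) (![0, -1] : Fin 2 → ℂ) (by simp only [Matrix.cons_val_zero, Matrix.cons_val_one, Matrix.head_cons]; try module) (by simp only [Matrix.cons_val_zero, Matrix.cons_val_one, Matrix.head_cons]; try module) (by simp only [Matrix.cons_val_zero, Matrix.cons_val_one, Matrix.head_cons]; try ring) (by simp only [Matrix.cons_val_zero, Matrix.cons_val_one, Matrix.head_cons]; try ring)]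
    rw [opL_subst D cu (-(Xv 1)) (-1) h.cu_add_left h.cu_smul_left h.cu_sesq_left b (Xv 0) (0) (pr a c) (![Xv 0, -(Xv 1)] : Fin 2 → MP 2 ℂ) (![0, -1] : Fin 2 → ℂ) (by simp only [Matrix.cons_val_zero, Matrix.cons_val_one, Matrix.head_cons]; try module) (by simp only [Matrix.cons_val_zero, Matrix.cons_val_one, Matrix.head_cons]; try module) (by simp only [Matrix.cons_val_zero, Matrix.cons_val_one, Matrix.head_cons]; try ring) (by simp only [Matrix.cons_val_zero, Matrix.cons_val_one, Matrix.head_cons]; try ring)]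
    rw [opL_subst D cu (-(Xv 1)) (-1) h.cu_add_left h.cu_smul_left h.cu_sesq_left b (Xv 0) (0) (cu a c) (![Xv 0, -(Xv 1)] : Fin 2 → MP 2 ℂ) (![0, -1] : Fin 2 → ℂ) (by simp only [Matrix.cons_val_zero, Matrix.cons_val_one, Matrix.head_cons]; try module) (by simp only [Matrix.cons_val_zero, Matrix.cons_val_one, Matrix.head_cons]; try module) (by simp only [Matrix.cons_val_zero, Matrix.cons_val_one, Matrix.head_cons]; try ring) (by simp only [Matrix.cons_val_zero, Matrix.cons_val_one, Matrix.head_cons]; try ring)]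
    rw [opL_subst D cu (-(Xv 1)) (-1) h.cu_add_left h.cu_smul_left h.cu_sesq_left b (-(Xv 0)) (-1) (su c a) (![-(Xv 0) - Xv 1, -(Xv 1)] : Fin 2 → MP 2 ℂ) (![-1, -1] : Fin 2 → ℂ) (by simp only [Matrix.cons_val_zero, Matrix.cons_val_one, Matrix.head_cons]; try module) (by simp only [Matrix.cons_val_zero, Matrix.cons_val_one, Matrix.head_cons]; try module) (by simp only [Matrix.cons_val_zero, Matrix.cons_val_one, Matrix.head_cons]; try ring) (by simp only [Matrix.cons_val_zero, Matrix.cons_val_one, Matrix.head_cons]; try ring)]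
    rw [opL_subst D cu (-(Xv 1)) (-1) h.cu_add_left h.cu_smul_left h.cu_sesq_left b (-(Xv 0)) (-1) (pr c a) (![-(Xv 0) - Xv 1, -(Xv 1)] : Fin 2 → MP 2 ℂ) (![-1, -1] : Fin 2 → ℂ) (by simp only [Matrix.cons_val_zero, Matrix.cons_val_one, Matrix.head_cons]; try module) (by simp only [Matrix.cons_val_zero, Matrix.cons_val_one, Matrix.head_cons]; try module) (by simp only [Matrix.cons_val_zero, Matrix.cons_val_one, Matrix.head_cons]; try ring) (by simp only [Matrix.cons_val_zero, Matrix.cons_val_one, Matrix.head_cons]; try ring)]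
    rw [opL_subst D cu (-(Xv 1)) (-1) h.cu_add_left h.cu_smul_left h.cu_sesq_left b (-(Xv 0)) (-1) (cu c a) (![-(Xv 0) - Xv 1, -(Xv 1)] : Fin 2 → MP 2 ℂ) (![-1, -1] : Fin 2 → ℂ) (by simp only [Matrix.cons_val_zero, Matrix.cons_val_one, Matrix.head_cons]; try module) (by simp only [Matrix.cons_val_zero, Matrix.cons_val_one, Matrix.head_cons]; try module) (by simp only [Matrix.cons_val_zero, Matrix.cons_val_one, Matrix.head_cons]; try ring) (by simp only [Matrix.cons_val_zero, Matrix.cons_val_one, Matrix.head_cons]; try ring)]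
    rw [opR_subst D su (Xv 0) (0) h.su_add_right h.su_smul_right h.su_sesq_right a (Xv 1) (0) (cu b c) (![Xv 1, Xv 0] : Fin 2 → MP 2 ℂ) (![0, 0] : Fin 2 → ℂ) (by simp only [Matrix.cons_val_zero, Matrix.cons_val_one, Matrix.head_cons]; try module) (by simp only [Matrix.cons_val_zero, Matrix.cons_val_one, Matrix.head_cons]; try module) (by simp only [Matrix.cons_val_zero, Matrix.cons_val_one, Matrix.head_cons]; try ring) (by simp only [Matrix.cons_val_zero, Matrix.cons_val_one, Matrix.head_cons]; try ring)]
    rw [opR_subst D su (Xv 0) (0) h.su_add_right h.su_smul_right h.su_sesq_right a (-(Xv 1)) (-1) (cu c b) (![-(Xv 0) - Xv 1, Xv 0] : Fin 2 → MP 2 ℂ) (![-1, 0] : Fin 2 → ℂ) (by simp only [Matrix.cons_val_zero, Matrix.cons_val_one, Matrix.head_cons]; try module) (by simp only [Matrix.cons_val_zero, Matrix.cons_val_one, Matrix.head_cons]; try module) (by simp only [Matrix.cons_val_zero, Matrix.cons_val_one, Matrix.head_cons]; try ring) (by simp only [Matrix.cons_val_zero, Matrix.cons_val_one, Matrix.head_cons];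 try ring)]
    rw [opL_subst D pr (-(Xv 0)) (-1) h.pr_add_left h.pr_smul_left h.pr_sesq_left a (Xv 1) (0) (cu b c) (![Xv 1, -(Xv 0)] : Fin 2 → MP 2 ℂ) (![0, -1] : Fin 2 → ℂ) (by simp only [Matrix.cons_val_zero, Matrix.cons_val_one, Matrix.head_cons]; try module) (by simp only [Matrix.cons_val_zero, Matrix.cons_val_one, Matrix.head_cons]; try module) (by simp only [Matrix.cons_val_zero, Matrix.cons_val_one, Matrix.head_cons]; try ring) (by simp only [Matrix.cons_val_zero, Matrix.cons_val_one, Matrix.head_cons]; try ring)]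
    rw [opL_subst D pr (-(Xv 0)) (-1) h.pr_add_left h.pr_smul_left h.pr_sesq_left a (-(Xv 1)) (-1) (cu c b) (![-(Xv 0) - Xv 1, -(Xv 0)] : Fin 2 → MP 2 ℂ) (![-1, -1] : Fin 2 → ℂ) (by simp only [Matrix.cons_val_zero, Matrix.cons_val_one, Matrix.head_cons]; try module) (by simp only [Matrix.cons_val_zero, Matrix.cons_val_one, Matrix.head_cons]; try module) (by simp only [Matrix.cons_val_zero, Matrix.cons_val_one, Matrix.head_cons]; try ring) (by simp only [Matrix.cons_val_zero, Matrix.cons_val_one, Matrix.head_cons]; try ring)]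
    rw [opR_subst D su (Xv 1) (0) h.su_add_right h.su_smul_right h.su_sesq_right b (Xv 0) (0) (cu a c) (![Xv 0, Xv 1] : Fin 2 → MP 2 ℂ) (![0, 0] : Fin 2 → ℂ) (by simp only [Matrix.cons_val_zero, Matrix.cons_val_one, Matrix.head_cons]; try module) (by simp only [Matrix.cons_val_zero, Matrix.cons_val_one, Matrix.head_cons]; try module) (by simp only [Matrix.cons_val_zero, Matrix.cons_val_one, Matrix.head_cons]; try ring) (by simp only [Matrix.cons_val_zero, Matrix.cons_val_one, Matrix.head_cons]; try ring)]
    rw [opR_subst D su (Xv 1) (0) h.su_add_right h.su_smul_right h.su_sesq_right b (-(Xv 0)) (-1) (cu c a) (![-(Xv 0) - Xv 1, Xv 1] : Fin 2 → MP 2 ℂ) (![-1, 0] : Fin 2 → ℂ) (by simp only [Matrix.cons_val_zero, Matrix.cons_val_one, Matrix.head_cons]; try module) (by simp only [Matrix.cons_val_zero, Matrix.cons_val_one, Matrix.head_cons]; try module) (by simp only [Matrix.cons_val_zero, Matrix.cons_val_one, Matrix.head_cons]; try ring) (by simp only [Matrix.cons_val_zero, Matrix.cons_val_one, Matrix.head_cons];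 try ring)]
    rw [opL_subst D pr (-(Xv 1)) (-1) h.pr_add_left h.pr_smul_left h.pr_sesq_left b (Xv 0) (0) (cu a c) (![Xv 0, -(Xv 1)] : Fin 2 → MP 2 ℂ) (![0, -1] : Fin 2 → ℂ) (by simp only [Matrix.cons_val_zero, Matrix.cons_val_one, Matrix.head_cons]; try module) (by simp only [Matrix.cons_val_zero, Matrix.cons_val_one, Matrix.head_cons]; try module) (by simp only [Matrix.cons_val_zero, Matrix.cons_val_one, Matrix.head_cons]; try ring) (by simp only [Matrix.cons_val_zero, Matrix.cons_val_one, Matrix.head_cons]; try ring)]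
    rw [opL_subst D pr (-(Xv 1)) (-1) h.pr_add_left h.pr_smul_left h.pr_sesq_left b (-(Xv 0)) (-1) (cu c a) (![-(Xv 0) - Xv 1, -(Xv 1)] : Fin 2 → MP 2 ℂ) (![-1, -1] : Fin 2 → ℂ) (by simp only [Matrix.cons_val_zero, Matrix.cons_val_one, Matrix.head_cons]; try module) (by simp only [Matrix.cons_val_zero, Matrix.cons_val_one, Matrix.head_cons]; try module) (by simp only [Matrix.cons_val_zero, Matrix.cons_val_one, Matrix.head_cons]; try ring) (by simp only [Matrix.cons_val_zero, Matrix.cons_val_one, Matrix.head_cons]; try ring)]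
    rw [opR_subst D su (-(Xv 0) - Xv 1) (-1) h.su_add_right h.su_smul_right h.su_sesq_right c (Xv 0) (0) (cu a b) (![Xv 0, -(Xv 0) - Xv 1] : Fin 2 → MP 2 ℂ) (![0, -1] : Fin 2 → ℂ) (by simp only [Matrix.cons_val_zero, Matrix.cons_val_one, Matrix.head_cons]; try module) (by simp only [Matrix.cons_val_zero, Matrix.cons_val_one, Matrix.head_cons]; try module) (by simp only [Matrix.cons_val_zero, Matrix.cons_val_one, Matrix.head_cons]; try ring) (by simp only [Matrix.cons_val_zero, Matrix.cons_val_one, Matrix.head_cons]; try ring)]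
    rw [opR_subst D su (-(Xv 0) - Xv 1) (-1) h.su_add_right h.su_smul_right h.su_sesq_right c (-(Xv 0)) (-1) (cu b a) (![Xv 1, -(Xv 0) - Xv 1] : Fin 2 → MP 2 ℂ) (![0, -1] : Fin 2 → ℂ) (by simp only [Matrix.cons_val_zero, Matrix.cons_val_one, Matrix.head_cons]; try module) (by simp only [Matrix.cons_val_zero, Matrix.cons_val_one, Matrix.head_cons]; try module) (by simp only [Matrix.cons_val_zero, Matrix.cons_val_one, Matrix.head_cons]; try ring) (by simp only [Matrix.cons_val_zero, Matrix.cons_val_one, Matrix.head_cons]; try ring)]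
    rw [opL_subst D pr (Xv 0 + Xv 1) (0) h.pr_add_left h.pr_smul_left h.pr_sesq_left c (Xv 0) (0) (cu a b) (![Xv 0, Xv 0 + Xv 1] : Fin 2 → MP 2 ℂ) (![0, 0] : Fin 2 → ℂ) (by simp only [Matrix.cons_val_zero, Matrix.cons_val_one, Matrix.head_cons]; try module) (by simp only [Matrix.cons_val_zero, Matrix.cons_val_one, Matrix.head_cons]; try module) (by simp only [Matrix.cons_val_zero, Matrix.cons_val_one, Matrix.head_cons]; try ring) (by simp only [Matrix.cons_val_zero, Matrix.cons_val_one, Matrix.head_cons]; try ring)]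
    rw [opL_subst D pr (Xv 0 + Xv 1) (0) h.pr_add_left h.pr_smul_left h.pr_sesq_left c (-(Xv 0)) (-1) (cu b a) (![Xv 1, Xv 0 + Xv 1] : Fin 2 → MP 2 ℂ) (![0, 0] : Fin 2 → ℂ) (by simp only [Matrix.cons_val_zero, Matrix.cons_val_one, Matrix.head_cons]; try module) (by simp only [Matrix.cons_val_zero, Matrix.cons_val_one, Matrix.head_cons]; try module) (by simp only [Matrix.cons_val_zero, Matrix.cons_val_one, Matrix.head_cons]; try ring) (by simp only [Matrix.cons_val_zero, Matrix.cons_val_one, Matrix.head_cons]; try ring)]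
    rw [f1, f2, f3, f4, f5, f6]
    abel

end LCAF
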